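/- arXiv:2604.03164 — 9 statements merged into one kernel-verified Lean document; each statement's English description precedes it below -/
import Mathlib

section
/- Campillo's criterion: Let R be a commutative ring, A a commutative R-algebra, K the total ring of fractions of A (the localization of A at its nonzerodivisors), and B an A-subalgebra of K. Let I_Δ be the ideal of B ⊗_R B generated by the elements a⊗1 − 1⊗a for a ∈ A. Let p ∈ A and let p_1,…,p_r, q_1,…,q_s be nonzerodivisors of A such that the fractions p/p_i (1 ≤ i ≤ r), p/q_j (1 ≤ j ≤ s) and (p_1⋯p_r)/(q_1⋯q_s), viewed as elements of K, all lie in B. Then the element w := p·(p_1⋯p_r)/(q_1⋯q_s) of K lies in B, and Δ(w) := w⊗1 − 1⊗w ∈ B ⊗_R B is integral over the ideal I_Δ; that is, there exist n ≥ 1 and elements c_1,…,c_n of B ⊗_R B with c_i ∈ I_Δ^i for each i such that Δ(w)^n + c_1·Δ(w)^{n−1} + ⋯ + c_n = 0. (Hence w belongs to the Lipschitz saturation A^s_B.) -/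
set_option synthInstance.maxHeartbeats 1000000
set_option maxHeartbeats 1000000

open scoped TensorProduct
open Finset

section Core
variable {S C : Type*} [CommRing S] [CommRing C] (φ ψ : S →+* C)

private def DD (f : S) : C := φ f - ψ f

private lemma DD_mul1 (f g : S) : DD φ ψ (f * g) = φ f * DD φ ψ g + ψ g * DD φ ψ f := by
  simp only [DD, map_mul]; ring

private lemma DD_mul2 (f g : S) : DD φ ψ (f * g) = ψ f * DD φ ψ g + φ g * DD φ ψ f := by
  simp only [DD, map_mul]; ring

private lemma DD_one : DD φ ψ (1 : S) = 0 := by simp [DD]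

/-- reversed telescope: `φ` carries the tail. -/
private lemma telescopeA (f : ℕ → S) (n : ℕ) :
    DD φ ψ (∏ k ∈ range n, f k)
      = ∑ i ∈ range n, φ (∏ k ∈ Ico (i+1) n, f k) * ψ (∏ k ∈ range i, f k) * DD φ ψ (f i) := by
  induction n with
  | zero => simp [DD]
  | succ n ih =>
    have hsum : ∑ i ∈ range n, φ (∏ k ∈ Ico (i+1) (n+1), f k) * ψ (∏ k ∈ range i, f k) * DD φ ψ (f i)
        = ∑ i ∈ range n, φ (f n) * (φ (∏ k ∈ Ico (i+1) n, f k) * ψ (∏ k ∈ range i, f k) * DD φ ψ (f i)) := by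
      refine sum_congr rfl fun i hi => ?_
      have hi' : i + 1 ≤ n := by have := mem_range.mp hi; omega
      rw [Finset.prod_Ico_succ_top hi', map_mul]; ring
    rw [prod_range_succ, DD_mul2, ih, sum_range_succ, hsum, ← Finset.mul_sum,
      Ico_self, prod_empty, map_one]
    ring

/-- forward telescope: `φ` carries the head. -/
private lemma telescopeB (f : ℕ → S) (n : ℕ) :
    DD φ ψ (∏ k ∈ range n, f k)
      = ∑ i ∈ range n, φ (∏ k ∈ range i, f k) * ψ (∏ k ∈ Ico (i+1) n, f k) * DD φ ψ (f i) := by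
  induction n with
  | zero => simp [DD]
  | succ n ih =>
    have hsum : ∑ i ∈ range n, φ (∏ k ∈ range i, f k) * ψ (∏ k ∈ Ico (i+1) (n+1), f k) * DD φ ψ (f i)
        = ∑ i ∈ range n, ψ (f n) * (φ (∏ k ∈ range i, f k) * ψ (∏ k ∈ Ico (i+1) n, f k) * DD φ ψ (f i)) := by
      refine sum_congr rfl fun i hi => ?_
      have hi' : i + 1 ≤ n := by have := mem_range.mp hi; omega
      rw [Finset.prod_Ico_succ_top hi', map_mul]; ring
    rw [prod_range_succ, DD_mul1, ih, sum_range_succ, hsum, ← Finset.mul_sum,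
      Ico_self, prod_empty, map_one]
    ring


private lemma prod_pairC {C : Type*} [CommRing C] (F G : ℕ → C) (d : C) (s : Finset ℕ) :
    (∏ k ∈ s, F k) * (∏ k ∈ s, G k) * d ^ s.card = ∏ k ∈ s, (F k * G k * d) := by
  rw [← prod_const d]
  rw [← prod_mul_distrib, ← prod_mul_distrib]

private lemma main_identity
    (P U : S) (pa pk qb qj : ℕ → S) (r n : ℕ) (hrn : r ≤ n) (hn : 1 ≤ n)
    (h1 : ∀ k, k < r → pa k * pk k = P)
    (h2 : ∀ j, j < n → qb j * qj j = P)
    (h3 : U * ∏ j ∈ range n, qj j = ∏ k ∈ range r, pk k)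
    (h4 : ∀ i, i < r → (∏ j ∈ range n, qb j) * ∏ k ∈ Ico (i+1) r, pk k
          = U * (∏ k ∈ range (i+1), pa k) * P ^ (n-1-i)) :
    (φ P * DD φ ψ U) ^ n
      = (∑ i ∈ range r, DD φ ψ (pk i) * φ (U * pa i) * (φ P * DD φ ψ U) ^ (n-1-i)
            * ∏ k ∈ range i, (φ P * DD φ ψ U - φ (pa k) * DD φ ψ (pk k) * DD φ ψ U))
        - ∑ j ∈ range n, DD φ ψ (qj j) * (φ (qb j) * ψ U) * (φ P * DD φ ψ U) ^ j
            * ∏ l ∈ Ico (j+1) n, (φ P * DD φ ψ U - φ (qb l) * DD φ ψ (qj l) * DD φ ψ U) := by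
  set d : C := DD φ ψ U with hd
  set y : C := φ P * d with hy
  -- step 1 :   P ^ n = (∏ qb) * (∏ qj)
  have hpn : P ^ n = (∏ j ∈ range n, qb j) * (∏ j ∈ range n, qj j) := by
    calc P ^ n = ∏ _j ∈ range n, P := by rw [prod_const, card_range]
    _ = ∏ j ∈ range n, (qb j * qj j) :=
        (prod_congr rfl fun j hj => (h2 j (mem_range.mp hj)).symm)
    _ = _ := prod_mul_distrib
  -- step 2 : φ(∏qj) * d = DD(∏pk) - ψ U * DD(∏qj)
  have hstep2 : φ (∏ j ∈ range n, qj j) * d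
      = DD φ ψ (∏ k ∈ range r, pk k) - ψ U * DD φ ψ (∏ j ∈ range n, qj j) := by
    have := DD_mul2 φ ψ U (∏ j ∈ range n, qj j)
    rw [h3] at this
    rw [hd, this]; ring
  -- step 3 : y^n in terms of the two DD-products
  have hyn : y ^ n = φ (∏ j ∈ range n, qb j) * d ^ (n-1) * DD φ ψ (∏ k ∈ range r, pk k)
      - φ (∏ j ∈ range n, qb j) * d ^ (n-1) * (ψ U * DD φ ψ (∏ j ∈ range n, qj j)) := by
    have hdn : d ^ n = d ^ (n-1) * d := by
      rw [← pow_succ]; congr 1; omega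
    calc y ^ n = φ (P ^ n) * d ^ n := by rw [hy, mul_pow, map_pow]
    _ = φ (∏ j ∈ range n, qb j) * d ^ (n-1) * (φ (∏ j ∈ range n, qj j) * d) := by
        rw [hpn, hdn, map_mul]; ring
    _ = _ := by rw [hstep2]; ring
  rw [hyn, telescopeA φ ψ pk r, telescopeB φ ψ qj n, Finset.mul_sum, Finset.mul_sum, Finset.mul_sum]
  congr 1
  · -- δP part
    refine sum_congr rfl fun i hi => ?_
    have hir : i < r := mem_range.mp hi
    have hin : i ≤ n - 1 := by omega
    have key4 : φ (∏ j ∈ range n, qb j) * φ (∏ k ∈ Ico (i+1) r, pk k)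
        = φ (U * pa i) * φ (∏ k ∈ range i, pa k) * φ P ^ (n-1-i) := by
      rw [← map_mul, h4 i hir, prod_range_succ, map_mul, map_mul, map_mul, map_pow,
        map_mul φ U (pa i)]
      ring
    have hsplit : d ^ (n-1) = d ^ (n-1-i) * d ^ i := by
      rw [← pow_add]; congr 1; omega
    have hpair : φ (∏ k ∈ range i, pa k) * ψ (∏ k ∈ range i, pk k) * d ^ i
        = ∏ k ∈ range i, (y - φ (pa k) * DD φ ψ (pk k) * d) := by
      rw [map_prod, map_prod]
      have := prod_pairC (fun k => φ (pa k)) (fun k => ψ (pk k)) d (range i)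
      rw [card_range] at this
      rw [this]
      refine prod_congr rfl fun k hk => ?_
      have hkr : k < r := lt_of_lt_of_le (mem_range.mp hk) (le_of_lt hir)
      have hψ : ψ (pk k) = φ (pk k) - DD φ ψ (pk k) := by
        show ψ (pk k) = φ (pk k) - (φ (pk k) - ψ (pk k)); ring
      rw [hψ, hy]
      have hthis : φ (pa k) * φ (pk k) = φ P := by rw [← map_mul, h1 k hkr]
      linear_combination d * hthis
    calc φ (∏ j ∈ range n, qb j) * d ^ (n-1)
          * (φ (∏ k ∈ Ico (i+1) r, pk k) * ψ (∏ k ∈ range i, pk k) * DD φ ψ (pk i))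
        = (φ (∏ j ∈ range n, qb j) * φ (∏ k ∈ Ico (i+1) r, pk k)) * d ^ (n-1)
          * ψ (∏ k ∈ range i, pk k) * DD φ ψ (pk i) := by ring
    _ = φ (U * pa i) * (φ P ^ (n-1-i) * d ^ (n-1-i))
          * (φ (∏ k ∈ range i, pa k) * ψ (∏ k ∈ range i, pk k) * d ^ i) * DD φ ψ (pk i) := by
        rw [key4, hsplit]; ring
    _ = _ := by
        rw [hpair, ← mul_pow, ← hy]; ring
  · -- δQ part
    refine sum_congr rfl fun j hj => ?_
    have hjn : j < n := mem_range.mp hj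
    have hqsplit : ∏ l ∈ range n, qb l
        = qb j * (∏ l ∈ range j, qb l) * ∏ l ∈ Ico (j+1) n, qb l := by
      rw [← Finset.prod_range_mul_prod_Ico qb (Nat.succ_le_of_lt hjn), prod_range_succ]
      ring
    have hpj : ∏ l ∈ range j, (qb l * qj l) = P ^ j := by
      rw [prod_congr rfl fun l hl => h2 l (lt_trans (mem_range.mp hl) hjn), prod_const, card_range]
    have hdsplit : d ^ (n-1) = d ^ j * d ^ (n-1-j) := by
      rw [← pow_add]; congr 1; omega
    have hpair : φ (∏ l ∈ Ico (j+1) n, qb l) * ψ (∏ l ∈ Ico (j+1) n, qj l) * d ^ (n-1-j)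
        = ∏ l ∈ Ico (j+1) n, (y - φ (qb l) * DD φ ψ (qj l) * d) := by
      rw [map_prod, map_prod]
      have := prod_pairC (fun l => φ (qb l)) (fun l => ψ (qj l)) d (Ico (j+1) n)
      rw [Nat.card_Ico] at this
      have hcard : n - (j+1) = n - 1 - j := by omega
      rw [hcard] at this
      rw [this]
      refine prod_congr rfl fun l hl => ?_
      have hln : l < n := (mem_Ico.mp hl).2
      have hψ : ψ (qj l) = φ (qj l) - DD φ ψ (qj l) := by
        show ψ (qj l) = φ (qj l) - (φ (qj l) - ψ (qj l)); ring
      rw [hψ, hy]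
      have hthis : φ (qb l) * φ (qj l) = φ P := by rw [← map_mul, h2 l hln]
      linear_combination d * hthis
    calc φ (∏ l ∈ range n, qb l) * d ^ (n-1)
          * (ψ U * (φ (∏ l ∈ range j, qj l) * ψ (∏ l ∈ Ico (j+1) n, qj l) * DD φ ψ (qj j)))
        = (φ (∏ l ∈ range n, qb l) * φ (∏ l ∈ range j, qj l)) * d ^ (n-1) * ψ U
          * ψ (∏ l ∈ Ico (j+1) n, qj l) * DD φ ψ (qj j) := by
          rw [map_prod, map_prod]; ring
    _ = DD φ ψ (qj j) * (φ (qb j) * ψ U) * (φ (P ^ j) * d ^ j)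
          * (φ (∏ l ∈ Ico (j+1) n, qb l) * ψ (∏ l ∈ Ico (j+1) n, qj l) * d ^ (n-1-j)) := by
        rw [hqsplit, hdsplit]
        rw [map_mul, map_mul]
        have : φ (∏ l ∈ range j, qb l) * φ (∏ l ∈ range j, qj l) = φ (P ^ j) := by
          rw [← map_mul, ← prod_mul_distrib, hpj]
        rw [← this]
        ring
    _ = _ := by
        rw [hpair, map_pow, ← mul_pow, ← hy]

end Core

section Good
variable {C : Type*} [CommRing C] (I : Ideal C) (x : C)

private def Good (n : ℕ) (z : C) : Prop :=
  ∃ c : ℕ → C, (∀ i, 1 ≤ i → i ≤ n → c i ∈ I ^ i) ∧ z = ∑ i ∈ Icc 1 n, c i * x ^ (n - i)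

private lemma good_zero (n : ℕ) : Good I x n 0 := by
  refine ⟨fun _ => 0, fun i _ _ => zero_mem _, ?_⟩
  simp

private lemma good_of_mem {n : ℕ} (hn : 1 ≤ n) {z : C} (hz : z ∈ I ^ n) : Good I x n z := by
  refine ⟨fun i => if i = n then z else 0, fun i h1 h2 => ?_, ?_⟩
  · by_cases h : i = n
    · simpa [h] using hz
    · simp [h]
  · rw [Finset.sum_eq_single n (fun b _ hbn => by simp [hbn])
      (fun hn' => absurd (mem_Icc.mpr ⟨hn, le_refl n⟩) hn')]
    simp

private lemma good_add {n : ℕ} {z w : C} (hz : Good I x n z) (hw : Good I x n w) :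
    Good I x n (z + w) := by
  obtain ⟨c, hc, rfl⟩ := hz
  obtain ⟨c', hc', rfl⟩ := hw
  refine ⟨fun i => c i + c' i, fun i h1 h2 => add_mem (hc i h1 h2) (hc' i h1 h2), ?_⟩
  rw [← Finset.sum_add_distrib]
  exact sum_congr rfl fun i _ => by ring

private lemma good_neg {n : ℕ} {z : C} (hz : Good I x n z) : Good I x n (-z) := by
  obtain ⟨c, hc, rfl⟩ := hz
  refine ⟨fun i => -(c i), fun i h1 h2 => neg_mem (hc i h1 h2), ?_⟩
  rw [← Finset.sum_neg_distrib]
  exact sum_congr rfl fun i _ => by ring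

private lemma good_coef {n : ℕ} {z : C} (t : C) (hz : Good I x n z) : Good I x n (t * z) := by
  obtain ⟨c, hc, rfl⟩ := hz
  refine ⟨fun i => t * c i, fun i h1 h2 => Ideal.mul_mem_left _ _ (hc i h1 h2), ?_⟩
  rw [Finset.mul_sum]
  exact sum_congr rfl fun i _ => by ring

private lemma good_x {n : ℕ} {z : C} (hz : Good I x n z) : Good I x (n+1) (x * z) := by
  obtain ⟨c, hc, rfl⟩ := hz
  refine ⟨fun i => if i ≤ n then c i else 0, fun i h1 h2 => ?_, ?_⟩
  · by_cases h : i ≤ n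
    · simpa [h] using hc i h1 h
    · simp [h]
  · rw [Finset.mul_sum, Finset.sum_Icc_succ_top (by omega : 1 ≤ n + 1)]
    simp only [Nat.lt_irrefl, if_neg (by omega : ¬ (n+1 ≤ n))]
    rw [zero_mul, add_zero]
    refine sum_congr rfl fun i hi => ?_
    have h2 : i ≤ n := (mem_Icc.mp hi).2
    rw [if_pos h2]
    have : n + 1 - i = (n - i) + 1 := by omega
    rw [this, pow_succ]
    ring

private lemma good_Imul {n : ℕ} {g z : C} (hg : g ∈ I) (hz : Good I x n z) :
    Good I x (n+1) (g * z) := by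
  obtain ⟨c, hc, rfl⟩ := hz
  refine ⟨fun i => if 2 ≤ i then g * c (i-1) else 0, fun i h1 h2 => ?_, ?_⟩
  · by_cases h : 2 ≤ i
    · simp only [if_pos h]
      have hmem : g * c (i-1) ∈ I * I ^ (i-1) :=
        Ideal.mul_mem_mul hg (hc (i-1) (by omega) (by omega))
      have hpow : I * I ^ (i-1) = I ^ i := by
        rw [← pow_succ']
        congr 1
        omega
      rwa [hpow] at hmem
    · simp [h]
  · calc g * ∑ i ∈ Icc 1 n, c i * x ^ (n - i)
        = ∑ i ∈ Icc 1 n, (fun i => (if 2 ≤ i then g * c (i-1) else 0) * x ^ (n+1-i)) (i+1) := by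
          rw [Finset.mul_sum]
          refine sum_congr rfl fun i hi => ?_
          have h1 : 1 ≤ i := (mem_Icc.mp hi).1
          have h2 : i ≤ n := (mem_Icc.mp hi).2
          simp only []
          rw [if_pos (by omega : 2 ≤ i + 1)]
          have e1 : i + 1 - 1 = i := by omega
          have e2 : n + 1 - (i + 1) = n - i := by omega
          rw [e1, e2]
          ring
      _ = ∑ i ∈ (Icc 1 n).map (addRightEmbedding 1),
            (if 2 ≤ i then g * c (i-1) else 0) * x ^ (n+1-i) := by
          rw [Finset.sum_map]
          refine sum_congr rfl fun i _ => ?_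
          simp [addRightEmbedding_apply]
      _ = ∑ i ∈ Icc 2 (n+1), (if 2 ≤ i then g * c (i-1) else 0) * x ^ (n+1-i) := by
          rw [Finset.map_add_right_Icc]
      _ = ∑ i ∈ Icc 1 (n+1), (if 2 ≤ i then g * c (i-1) else 0) * x ^ (n+1-i) := by
          refine Finset.sum_subset (Finset.Icc_subset_Icc (by omega) le_rfl) fun i hi hni => ?_
          have : ¬ 2 ≤ i := by
            simp only [mem_Icc] at hi hni; omega
          simp [this]

private lemma good_prod {n : ℕ} {z : C} (hz : Good I x n z) (F : Finset ℕ) (g : ℕ → C)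
    (hgI : ∀ m ∈ F, g m ∈ I) : Good I x (n + F.card) (z * ∏ m ∈ F, (x - g m)) := by
  classical
  induction F using Finset.cons_induction with
  | empty => simpa using hz
  | cons a F ha ih =>
    rw [Finset.prod_cons, Finset.card_cons]
    have hz1 : Good I x (n + F.card) (z * ∏ m ∈ F, (x - g m)) :=
      ih fun m hm => hgI m (Finset.mem_cons.mpr (Or.inr hm))
    have heq : z * ((x - g a) * ∏ m ∈ F, (x - g m))
        = x * (z * ∏ m ∈ F, (x - g m)) + -(g a * (z * ∏ m ∈ F, (x - g m))) := by ring
    rw [heq]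
    have : n + (F.card + 1) = (n + F.card) + 1 := by omega
    rw [this]
    exact good_add I x (good_x I x hz1)
      (good_neg I x (good_Imul I x (hgI a (Finset.mem_cons_self a F)) hz1))

private lemma good_sum {n : ℕ} (F : Finset ℕ) (f : ℕ → C)
    (hf : ∀ i ∈ F, Good I x n (f i)) : Good I x n (∑ i ∈ F, f i) := by
  classical
  induction F using Finset.cons_induction with
  | empty => simpa using good_zero I x n
  | cons a F ha ih =>
    rw [Finset.sum_cons]
    exact good_add I x (hf a (Finset.mem_cons_self a F))
      (ih fun i hi => hf i (Finset.mem_cons.mpr (Or.inr hi)))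

end Good

private lemma good_congr {C : Type*} [CommRing C] (I : Ideal C) (x : C) {n : ℕ} {z z' : C}
    (h : z = z') (hz : Good I x n z) : Good I x n z' := h ▸ hz


/-- **Campillo's criterion.**
Let `A` be a commutative `R`-algebra, `K` its total ring of fractions, and `B` an
`A`-subalgebra of `K`.  Let `I_Δ ⊆ B ⊗[R] B` be the ideal generated by the elements
`a ⊗ 1 − 1 ⊗ a` for `a ∈ A`.  Given `p ∈ A` and nonzerodivisors
`P 1, …, P r, Q 1, …, Q s` of `A` such that the fractions `p / P i`, `p / Q j` and
`(P 1 ⋯ P r) / (Q 1 ⋯ Q s)` all lie in `B`, the element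
`w := p (P 1 ⋯ P r) / (Q 1 ⋯ Q s)` lies in `B` and `Δ(w) := w ⊗ 1 − 1 ⊗ w` is
integral over the ideal `I_Δ`; hence `w` belongs to the Lipschitz saturation
`A^s_B`. -/
theorem campillo_criterion
    (R A K : Type*) [CommRing R] [CommRing A] [CommRing K]
    [Algebra R A] [Algebra A K] [Algebra R K] [IsScalarTower R A K]
    [IsFractionRing A K]
    (B : Subalgebra A K)
    {r s : ℕ} (p : A) (P : Fin r → A) (Q : Fin s → A)
    (hP : ∀ i, P i ∈ nonZeroDivisors A) (hQ : ∀ j, Q j ∈ nonZeroDivisors A)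
    (hPB : ∀ i, ∃ x ∈ B, x * algebraMap A K (P i) = algebraMap A K p)
    (hQB : ∀ j, ∃ x ∈ B, x * algebraMap A K (Q j) = algebraMap A K p)
    (hPQ : ∃ x ∈ B, x * algebraMap A K (∏ j, Q j) = algebraMap A K (∏ i, P i))
    (IΔ : Ideal (↥B ⊗[R] ↥B))
    (hIΔ : IΔ = Ideal.span {x : ↥B ⊗[R] ↥B |
        ∃ a : A, x = algebraMap A ↥B a ⊗ₜ[R] 1 - 1 ⊗ₜ[R] algebraMap A ↥B a}) :
    ∃ w : ↥B,
      (w : K) * algebraMap A K (∏ j, Q j) = algebraMap A K (p * ∏ i, P i) ∧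
      ∃ n : ℕ, 1 ≤ n ∧ ∃ c : ℕ → (↥B ⊗[R] ↥B),
        (∀ i, 1 ≤ i → i ≤ n → c i ∈ IΔ ^ i) ∧
        (w ⊗ₜ[R] 1 - 1 ⊗ₜ[R] w) ^ n +
            ∑ i ∈ Finset.Icc 1 n, c i * (w ⊗ₜ[R] 1 - 1 ⊗ₜ[R] w) ^ (n - i) = 0 := by
  classical
  obtain ⟨u₀, hu₀B, hu₀⟩ := hPQ
  set u : ↥B := ⟨u₀, hu₀B⟩ with hu_def
  set π : A →+* ↥B := algebraMap A ↥B with hπ_def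
  have hπcoe : ∀ t : A, ((π t : ↥B) : K) = algebraMap A K t := fun t => rfl
  set w : ↥B := π p * u with hw_def
  refine ⟨w, ?_, ?_⟩
  · -- the defining equation of w
    have : (w : K) = algebraMap A K p * u₀ := rfl
    rw [this, map_mul, mul_assoc, hu₀]
  -- now the integral dependence equation
  -- index data
  set pA : ℕ → A := fun k => if h : k < r then P ⟨k, h⟩ else 1 with hpA_def
  set qA : ℕ → A := fun j => if h : j < s then Q ⟨j, h⟩ else 1 with hqA_def
  set n : ℕ := max (max r s) 1 with hn_def
  have hn1 : 1 ≤ n := le_max_right _ _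
  have hrn : r ≤ n := le_trans (le_max_left r s) (le_max_left _ _)
  have hsn : s ≤ n := le_trans (le_max_right r s) (le_max_left _ _)
  set a : ℕ → ↥B := fun k =>
    if h : k < r then ⟨(hPB ⟨k, h⟩).choose, (hPB ⟨k, h⟩).choose_spec.1⟩ else 1 with ha_def
  set b : ℕ → ↥B := fun j =>
    if h : j < s then ⟨(hQB ⟨j, h⟩).choose, (hQB ⟨j, h⟩).choose_spec.1⟩ else π p with hb_def
  -- nonzerodivisor facts
  have hpA_nzd : ∀ k, pA k ∈ nonZeroDivisors A := by
    intro k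
    by_cases h : k < r
    · simpa [hpA_def, h] using hP ⟨k, h⟩
    · simp [hpA_def, h]
  have hqA_nzd : ∀ j, qA j ∈ nonZeroDivisors A := by
    intro j
    by_cases h : j < s
    · simpa [hqA_def, h] using hQ ⟨j, h⟩
    · simp [hqA_def, h]
  -- cancellation in ↥B
  have hcancel : ∀ (t : A), t ∈ nonZeroDivisors A → ∀ z z' : ↥B,
      z * π t = z' * π t → z = z' := by
    intro t ht z z' h
    have hunit : IsUnit (algebraMap A K t) := IsLocalization.map_units K ⟨t, ht⟩
    apply Subtype.ext
    have hcoe : (z : K) * algebraMap A K t = (z' : K) * algebraMap A K t := by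
      have := congrArg (Subtype.val) h
      simpa [hπcoe] using this
    exact hunit.mul_right_cancel hcoe
  -- the B-relations
  have h1 : ∀ k, k < r → a k * π (pA k) = π p := by
    intro k hk
    apply Subtype.ext
    have hch := (hPB ⟨k, hk⟩).choose_spec.2
    simp only [ha_def, hpA_def, dif_pos hk]
    simpa [hπcoe] using hch
  have h2 : ∀ j, j < n → b j * π (qA j) = π p := by
    intro j hj
    by_cases h : j < s
    · apply Subtype.ext
      have hch := (hQB ⟨j, h⟩).choose_spec.2
      simp only [hb_def, hqA_def, dif_pos h]
      simpa [hπcoe] using hch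
    · simp only [hb_def, hqA_def, dif_neg h, map_one, mul_one]
  have hprod_qA : ∏ j ∈ range n, qA j = ∏ j, Q j := by
    rw [← Finset.prod_range_mul_prod_Ico qA hsn]
    have h2' : ∏ j ∈ Ico s n, qA j = 1 :=
      Finset.prod_eq_one fun j hj => by
        have : ¬ j < s := by have := (mem_Ico.mp hj).1; omega
        simp [hqA_def, this]
    rw [h2', mul_one, ← Fin.prod_univ_eq_prod_range (fun j => qA j) s]
    exact Finset.prod_congr rfl fun j _ => by simp [hqA_def, j.2]
  have hprod_pA : ∏ k ∈ range r, pA k = ∏ i, P i := by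
    rw [← Fin.prod_univ_eq_prod_range (fun k => pA k) r]
    exact Finset.prod_congr rfl fun k _ => by simp [hpA_def, k.2]
  have h3 : u * ∏ j ∈ range n, π (qA j) = ∏ k ∈ range r, π (pA k) := by
    apply Subtype.ext
    rw [← map_prod, ← map_prod]
    have : ((u * π (∏ j ∈ range n, qA j) : ↥B) : K)
        = u₀ * algebraMap A K (∏ j ∈ range n, qA j) := rfl
    rw [this, hprod_qA, hu₀, hπcoe, hprod_pA]
  have h4 : ∀ i, i < r → (∏ j ∈ range n, b j) * ∏ k ∈ Ico (i+1) r, π (pA k)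
      = u * (∏ k ∈ range (i+1), a k) * (π p) ^ (n-1-i) := by
    intro i hi
    set t : A := (∏ j ∈ range n, qA j) * ∏ k ∈ range (i+1), pA k with ht_def
    have ht : t ∈ nonZeroDivisors A :=
      mul_mem (prod_mem fun j _ => hqA_nzd j) (prod_mem fun k _ => hpA_nzd k)
    apply hcancel t ht
    have hπt : π t = (∏ j ∈ range n, π (qA j)) * ∏ k ∈ range (i+1), π (pA k) := by
      rw [ht_def, map_mul, map_prod, map_prod]
    have hbq : ∏ j ∈ range n, (b j * π (qA j)) = (π p) ^ n := by
      rw [Finset.prod_congr rfl fun j hj => h2 j (mem_range.mp hj), prod_const, card_range]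
    have haq : ∏ k ∈ range (i+1), (a k * π (pA k)) = (π p) ^ (i+1) := by
      rw [Finset.prod_congr rfl fun k hk => h1 k (by have := mem_range.mp hk; omega),
        prod_const, card_range]
    have hsplit : (∏ k ∈ range (i+1), π (pA k)) * ∏ k ∈ Ico (i+1) r, π (pA k)
        = ∏ k ∈ range r, π (pA k) :=
      Finset.prod_range_mul_prod_Ico (fun k => π (pA k)) (by omega)
    have hL : ((∏ j ∈ range n, b j) * ∏ k ∈ Ico (i+1) r, π (pA k)) * π t
        = (π p) ^ n * ∏ k ∈ range r, π (pA k) := by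
      rw [hπt, ← hbq, ← hsplit, prod_mul_distrib]
      ring
    have hR : (u * (∏ k ∈ range (i+1), a k) * (π p) ^ (n-1-i)) * π t
        = (π p) ^ n * ∏ k ∈ range r, π (pA k) := by
      rw [hπt]
      have hpow : (π p) ^ (i+1) * (π p) ^ (n-1-i) = (π p) ^ n := by
        rw [← pow_add]
        congr 1
        omega
      have hmerge : (∏ k ∈ range (i+1), a k) * ∏ k ∈ range (i+1), π (pA k) = (π p) ^ (i+1) := by
        rw [← prod_mul_distrib]
        exact haq
      calc u * (∏ k ∈ range (i+1), a k) * (π p) ^ (n-1-i)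
            * ((∏ j ∈ range n, π (qA j)) * ∏ k ∈ range (i+1), π (pA k))
          = (u * ∏ j ∈ range n, π (qA j)) * ((∏ k ∈ range (i+1), a k) * ∏ k ∈ range (i+1), π (pA k))
            * (π p) ^ (n-1-i) := by ring
        _ = (∏ k ∈ range r, π (pA k)) * (π p) ^ (i+1) * (π p) ^ (n-1-i) := by
            rw [h3, hmerge]
        _ = (π p) ^ n * ∏ k ∈ range r, π (pA k) := by
            rw [mul_assoc, hpow]; ring
    rw [hL, hR]
  -- tensor level
  set φ : ↥B →+* ↥B ⊗[R] ↥B := (Algebra.TensorProduct.includeLeft : ↥B →ₐ[R] ↥B ⊗[R] ↥B).toRingHom with hφ_def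
  set ψ : ↥B →+* ↥B ⊗[R] ↥B := (Algebra.TensorProduct.includeRight : ↥B →ₐ[R] ↥B ⊗[R] ↥B).toRingHom with hψ_def
  have hφ_apply : ∀ f : ↥B, φ f = f ⊗ₜ[R] 1 := fun f => rfl
  have hψ_apply : ∀ f : ↥B, ψ f = 1 ⊗ₜ[R] f := fun f => rfl
  have hIgen : ∀ t : A, DD φ ψ (π t) ∈ IΔ := by
    intro t
    rw [hIΔ]
    exact Ideal.subset_span ⟨t, by rw [DD, hφ_apply, hψ_apply]⟩
  set x : ↥B ⊗[R] ↥B := w ⊗ₜ[R] 1 - 1 ⊗ₜ[R] w with hx_def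
  have hxDD : x = DD φ ψ w := by rw [hx_def, DD, hφ_apply, hψ_apply]
  set d : ↥B ⊗[R] ↥B := DD φ ψ u with hd_def
  set y : ↥B ⊗[R] ↥B := φ (π p) * d with hy_def
  set i0 : ↥B ⊗[R] ↥B := ψ u * DD φ ψ (π p) with hi0_def
  have hi0I : i0 ∈ IΔ := Ideal.mul_mem_left _ _ (hIgen p)
  have hxy : x = y + i0 := by
    rw [hxDD, hw_def, DD_mul1 φ ψ (π p) u, hy_def, hi0_def, hd_def]
  have hyx : y = x - i0 := by rw [hxy]; ring
  -- the main identity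
  have hmain := main_identity φ ψ (π p) u a (fun k => π (pA k)) b (fun j => π (qA j))
    r n hrn hn1 h1 h2 h3 h4
  -- Good facts
  have hgood : Good IΔ x n (x ^ n) := by
    have hbin : x ^ n = (∑ j ∈ range n, y ^ j * i0 ^ (n - j) * (n.choose j : ↥B ⊗[R] ↥B))
        + y ^ n := by
      rw [hxy, add_pow, sum_range_succ]
      simp
    rw [hbin]
    refine good_add _ _ ?_ ?_
    · -- binomial part
      refine good_sum _ _ _ _ fun j hj => ?_
      have hjn : j < n := mem_range.mp hj
      have hz : i0 ^ (n - j) * (n.choose j : ↥B ⊗[R] ↥B) ∈ IΔ ^ (n - j) :=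
        Ideal.mul_mem_right _ _ (Ideal.pow_mem_pow hi0I _)
      have hg1 : Good IΔ x (n - j) (i0 ^ (n - j) * (n.choose j : ↥B ⊗[R] ↥B)) :=
        good_of_mem _ _ (by omega) hz
      have hg2 := good_prod IΔ x hg1 (range j) (fun _ => i0) (fun m _ => hi0I)
      rw [card_range] at hg2
      have hnj : n - j + j = n := by omega
      rw [hnj] at hg2
      refine good_congr _ _ ?_ hg2
      rw [prod_const, card_range, ← hyx]
      ring
    · -- main part
      rw [hmain]
      refine good_add _ _ (good_sum _ _ _ _ fun i hi => ?_) (good_neg _ _ (good_sum _ _ _ _ fun j hj => ?_))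
      · -- δP terms
        have hir : i < r := mem_range.mp hi
        have hzI : DD φ ψ (π (pA i)) * φ (u * a i) ∈ IΔ :=
          Ideal.mul_mem_right _ _ (hIgen (pA i))
        have hg1 : Good IΔ x 1 (DD φ ψ (π (pA i)) * φ (u * a i)) :=
          good_of_mem _ _ le_rfl (by simpa using hzI)
        have hg2 := good_prod IΔ x hg1 (range (n-1-i)) (fun _ => i0) (fun m _ => hi0I)
        rw [card_range] at hg2
        have hg3 := good_prod IΔ x hg2 (range i)
          (fun k => i0 + φ (a k) * DD φ ψ (π (pA k)) * d)
          (fun k _ => add_mem hi0I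
            (Ideal.mul_mem_right _ _ (Ideal.mul_mem_left _ _ (hIgen (pA k)))))
        rw [card_range] at hg3
        have hcount : 1 + (n - 1 - i) + i = n := by omega
        rw [hcount] at hg3
        refine good_congr _ _ ?_ hg3
        have e1 : ∏ _m ∈ range (n-1-i), (x - i0) = y ^ (n-1-i) := by
          rw [prod_const, card_range, ← hyx]
        have e2 : ∏ k ∈ range i, (x - (i0 + φ (a k) * DD φ ψ (π (pA k)) * d))
            = ∏ k ∈ range i, (y - φ (a k) * DD φ ψ (π (pA k)) * d) := by
          refine prod_congr rfl fun k _ => ?_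
          rw [hyx]; ring
        rw [e1, e2]
        try ring
      · -- δQ terms
        have hjn : j < n := mem_range.mp hj
        have hzI : DD φ ψ (π (qA j)) * (φ (b j) * ψ u) ∈ IΔ :=
          Ideal.mul_mem_right _ _ (hIgen (qA j))
        have hg1 : Good IΔ x 1 (DD φ ψ (π (qA j)) * (φ (b j) * ψ u)) :=
          good_of_mem _ _ le_rfl (by simpa using hzI)
        have hg2 := good_prod IΔ x hg1 (range j) (fun _ => i0) (fun m _ => hi0I)
        rw [card_range] at hg2
        have hg3 := good_prod IΔ x hg2 (Ico (j+1) n)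
          (fun l => i0 + φ (b l) * DD φ ψ (π (qA l)) * d)
          (fun l _ => add_mem hi0I
            (Ideal.mul_mem_right _ _ (Ideal.mul_mem_left _ _ (hIgen (qA l)))))
        rw [Nat.card_Ico] at hg3
        have hcount : 1 + j + (n - (j+1)) = n := by omega
        rw [hcount] at hg3
        refine good_congr _ _ ?_ hg3
        have e1 : ∏ _m ∈ range j, (x - i0) = y ^ j := by
          rw [prod_const, card_range, ← hyx]
        have e2 : ∏ l ∈ Ico (j+1) n, (x - (i0 + φ (b l) * DD φ ψ (π (qA l)) * d))
            = ∏ l ∈ Ico (j+1) n, (y - φ (b l) * DD φ ψ (π (qA l)) * d) := by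
          refine prod_congr rfl fun l _ => ?_
          rw [hyx]; ring
        rw [e1, e2]
        try ring
  -- extract the equation
  obtain ⟨c, hc, hsum⟩ := hgood
  refine ⟨n, hn1, fun i => -(c i), fun i hi1 hi2 => neg_mem (hc i hi1 hi2), ?_⟩
  have : ∑ i ∈ Icc 1 n, -(c i) * x ^ (n - i) = -(∑ i ∈ Icc 1 n, c i * x ^ (n - i)) := by
    rw [← Finset.sum_neg_distrib]
    exact sum_congr rfl fun i _ => by ring
  rw [this, ← hsum]
  ring
end

section
/- Characterization of Newton polyhedra by support inequalities: Let σ ⊆ ℝ^d be the closed convex cone generated by a finite set of integer vectors, and assume σ has nonempty interior. Let I be a finite nonempty index set and let q and p_i (i ∈ I) be elements of ℤ^d. Then q ∈ N_σ(p_i | i ∈ I) if and only if for every v ∈ ℤ^d satisfying ⟨x,v⟩ ≥ 0 for all x ∈ σ one has ⟨q,v⟩ ≥ min_{i∈I} ⟨p_i,v⟩. -/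
private def dotp {F : Type*} [CommRing F] {d : ℕ} (u v : Fin d → F) : F := ∑ k, u k * v k

private lemma dotp_sub_smul_left {F : Type*} [CommRing F] {d : ℕ} (u v z : Fin d → F) (c : F) :
    dotp (u - c • v) z = dotp u z - c * dotp v z := by
  simp [dotp, sub_mul, Finset.sum_sub_distrib, Finset.mul_sum, mul_assoc]

private lemma dotp_sub_smul_right {F : Type*} [CommRing F] {d : ℕ} (u z y : Fin d → F) (c : F) :
    dotp u (z - c • y) = dotp u z - c * dotp u y := by
  simp [dotp, mul_sub, Finset.sum_sub_distrib, Finset.mul_sum]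
  congr 1
  ext k
  ring

private theorem farkas_aux {F : Type*} [Field F] [LinearOrder F] [IsStrictOrderedRing F] {d : ℕ} {ι : Type*}
    [DecidableEq ι] (A : Finset ι) :
    ∀ (a : ι → Fin d → F) (b : Fin d → F),
      (∃ lam : ι → F, (∀ i, 0 ≤ lam i) ∧ b = ∑ i ∈ A, lam i • a i) ∨
      (∃ y : Fin d → F, (∀ i ∈ A, 0 ≤ dotp (a i) y) ∧ dotp b y < 0) := by
  induction A using Finset.induction_on with
  | empty =>
    intro a b
    by_cases hb : b = 0
    · exact Or.inl ⟨0, fun i => le_refl 0, by simp [hb]⟩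
    · refine Or.inr ⟨-b, by simp, ?_⟩
      have hpos : 0 < dotp b b := by
        obtain ⟨k, hk⟩ := Function.ne_iff.mp hb
        exact Finset.sum_pos' (fun k _ => mul_self_nonneg _)
          ⟨k, Finset.mem_univ k, mul_self_pos.mpr (by simpa using hk)⟩
      have : dotp b (-b) = -dotp b b := by simp [dotp]
      rw [this]; linarith
  | @insert i A hiA ih =>
    intro a b
    rcases ih a b with ⟨lam, hlam, hb⟩ | ⟨y, hy, hby⟩
    · refine Or.inl ⟨fun j => if j = i then 0 else lam j, fun j => ?_, ?_⟩
      · dsimp only; split <;> [rfl; exact hlam j]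
      · rw [Finset.sum_insert hiA]; dsimp only; rw [if_pos rfl, zero_smul, zero_add, hb]
        exact Finset.sum_congr rfl fun j hj => by
          rw [if_neg (by rintro rfl; exact hiA hj)]
    · by_cases hiy : 0 ≤ dotp (a i) y
      · exact Or.inr ⟨y, fun j hj => by
          rcases Finset.mem_insert.mp hj with rfl | hj
          · exact hiy
          · exact hy j hj, hby⟩
      · push_neg at hiy
        set D := dotp (a i) y with hD
        have hDne : D ≠ 0 := ne_of_lt hiy
        -- projected system
        set a' : ι → Fin d → F := fun j => a j - (dotp (a j) y / D) • a i with ha'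
        set b' : Fin d → F := b - (dotp b y / D) • a i with hb'
        rcases ih a' b' with ⟨lam, hlam, hbe⟩ | ⟨z, hz, hbz⟩
        · -- b is in the cone
          set S := ∑ j ∈ A, lam j • a j with hS
          set T := ∑ j ∈ A, lam j * (dotp (a j) y / D) with hT
          set e := dotp b y / D with he
          have expand : b' = S - T • a i := by
            rw [hbe, ha', hS, hT]
            simp only [smul_sub, Finset.sum_sub_distrib, smul_smul, Finset.sum_smul]
          have hμ0 : 0 ≤ e - T := by
            have h1 : 0 < e := div_pos_of_neg_of_neg hby hiy
            have h2 : T ≤ 0 := by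
              rw [hT]
              exact Finset.sum_nonpos fun j hj =>
                mul_nonpos_of_nonneg_of_nonpos (hlam j)
                  (div_nonpos_of_nonneg_of_nonpos (hy j hj) hiy.le)
            linarith
          refine Or.inl ⟨fun j => if j = i then e - T else lam j, fun j => ?_, ?_⟩
          · dsimp only; split <;> [exact hμ0; exact hlam j]
          · rw [Finset.sum_insert hiA]; dsimp only; rw [if_pos rfl]
            have hsum : ∑ j ∈ A, (if j = i then e - T else lam j) • a j = S :=
              Finset.sum_congr rfl fun j hj => by
                rw [if_neg (by rintro rfl; exact hiA hj)]
            rw [hsum]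
            calc b = b - e • a i + e • a i := by abel
              _ = (S - T • a i) + e • a i := by rw [← hb', expand]
              _ = (e - T) • a i + S := by rw [sub_smul]; abel
        · -- separating functional
          refine Or.inr ⟨z - (dotp (a i) z / D) • y, fun j hj => ?_, ?_⟩
          · rcases Finset.mem_insert.mp hj with rfl | hj
            · rw [dotp_sub_smul_right]
              rw [div_mul_cancel₀ _ hDne]
              simp
            · have := hz j hj
              rw [ha'] at this
              rw [dotp_sub_smul_left] at this
              rw [dotp_sub_smul_right]
              calc (0:F) ≤ dotp (a j) z - dotp (a j) y / D * dotp (a i) z := this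
                _ = dotp (a j) z - dotp (a i) z / D * dotp (a j) y := by ring
          · rw [dotp_sub_smul_right]
            calc dotp b z - dotp (a i) z / D * dotp b y
                = dotp b z - dotp b y / D * dotp (a i) z := by ring
              _ = dotp b' z := by rw [hb', dotp_sub_smul_left]
              _ < 0 := hbz



open Finset

/-- The Newton polyhedron of a finite family of points with respect to a cone `σ`:
the convex hull of the union of the translates `p i + σ`. -/
noncomputable def newtonPolyhedron {d : ℕ} {ι : Type*} (σ : Set (Fin d → ℝ))
    (I : Finset ι) (p : ι → (Fin d → ℝ)) : Set (Fin d → ℝ) :=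
  convexHull ℝ (⋃ i ∈ I, (fun z => p i + z) '' σ)

/-- **Characterization of Newton polyhedra by support inequalities.**
Let `σ ⊆ ℝ^d` be the convex cone generated by a finite set of integer vectors
`g 1, …, g N`, and assume `σ` has nonempty interior.  For integer points `q` and
`p i` (`i ∈ I`, `I` finite and nonempty), `q` lies in the Newton polyhedron
`N_σ(p i | i ∈ I)` if and only if for every integer vector `v` that is nonnegative
on `σ` one has `⟨q, v⟩ ≥ min_{i ∈ I} ⟨p i, v⟩`. -/
theorem mem_newtonPolyhedron_iff_support_inequalities
    {d N n : ℕ} (g : Fin N → (Fin d → ℤ))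
    (σ : Set (Fin d → ℝ))
    (hσ : σ = {x : Fin d → ℝ | ∃ c : Fin N → ℝ,
        (∀ j, 0 ≤ c j) ∧ x = ∑ j, c j • (fun k => (g j k : ℝ))})
    (hint : (interior σ).Nonempty)
    (I : Finset (Fin n)) (hI : I.Nonempty)
    (q : Fin d → ℤ) (p : Fin n → (Fin d → ℤ)) :
    (fun k => (q k : ℝ)) ∈
        newtonPolyhedron σ I (fun i => fun k => (p i k : ℝ)) ↔
      ∀ v : Fin d → ℤ,
        (∀ x ∈ σ, 0 ≤ ∑ k, x k * (v k : ℝ)) →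
        I.inf' hI (fun i => ∑ k, p i k * v k) ≤ ∑ k, q k * v k := by
  classical
  constructor
  · -- forward direction
    intro hq v hv
    set m : ℤ := I.inf' hI (fun i => ∑ k, p i k * v k) with hm
    have hlin : IsLinearMap ℝ (fun x : Fin d → ℝ => ∑ k, x k * (v k : ℝ)) := by
      constructor
      · intro x y; simp [add_mul, Finset.sum_add_distrib]
      · intro c x; simp [Finset.mul_sum, mul_assoc]
    have hconv : Convex ℝ {x : Fin d → ℝ | (m : ℝ) ≤ ∑ k, x k * (v k : ℝ)} :=
      convex_halfSpace_ge hlin _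
    have hsub : (⋃ i ∈ I, (fun z => (fun k => (p i k : ℝ)) + z) '' σ) ⊆
        {x : Fin d → ℝ | (m : ℝ) ≤ ∑ k, x k * (v k : ℝ)} := by
      rintro x hx
      simp only [Set.mem_iUnion, Set.mem_image] at hx
      obtain ⟨i, hi, z, hz, rfl⟩ := hx
      have h1 : m ≤ ∑ k, p i k * v k := Finset.inf'_le _ hi
      have h1' : (m : ℝ) ≤ ∑ k, (p i k : ℝ) * (v k : ℝ) := by exact_mod_cast h1
      have h2 := hv z hz
      simp only [Set.mem_setOf_eq, Pi.add_apply, add_mul, Finset.sum_add_distrib]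
      linarith
    have := convexHull_min hsub hconv hq
    have : (m : ℝ) ≤ ∑ k, (q k : ℝ) * (v k : ℝ) := this
    exact_mod_cast this
  · -- reverse direction
    intro h
    rcases farkas_aux (F := ℚ) (I.disjSum (Finset.univ : Finset (Fin N)))
        (Sum.elim (fun i => Fin.cons 1 (fun k => (p i k : ℚ)))
          (fun j => Fin.cons 0 (fun k => (g j k : ℚ))))
        (Fin.cons 1 (fun k => (q k : ℚ))) with ⟨lam, hlam, hb⟩ | ⟨y, hy, hby⟩
    · -- q is in the Newton polyhedron
      simp only [Finset.sum_disjSum, Sum.elim_inl, Sum.elim_inr] at hb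
      have hb0 := congrFun hb (0 : Fin (d + 1))
      have hbk := fun k : Fin d => congrFun hb k.succ
      simp only [Finset.sum_apply, Pi.add_apply, Pi.smul_apply, smul_eq_mul,
        Fin.cons_zero, mul_one, mul_zero, Finset.sum_const_zero, add_zero] at hb0
      simp only [Finset.sum_apply, Pi.add_apply, Pi.smul_apply, smul_eq_mul,
        Fin.cons_succ] at hbk
      set Λ : Fin n → ℝ := fun i => ((lam (Sum.inl i) : ℚ) : ℝ) with hΛ
      set C : Fin N → ℝ := fun j => ((lam (Sum.inr j) : ℚ) : ℝ) with hC
      set z : Fin d → ℝ := ∑ j, C j • (fun k => (g j k : ℝ)) with hzdef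
      have hz : z ∈ σ := by
        rw [hσ]
        exact ⟨C, fun j => by exact_mod_cast Rat.cast_nonneg.mpr (hlam (Sum.inr j)), rfl⟩
      have hΛsum : ∑ i ∈ I, Λ i = 1 := by
        have : (1 : ℚ) = ∑ i ∈ I, lam (Sum.inl i) := hb0
        rw [hΛ]; push_cast; exact_mod_cast this.symm
      have hkey : (fun k => (q k : ℝ)) = ∑ i ∈ I, Λ i • ((fun k => (p i k : ℝ)) + z) := by
        have expand : ∑ i ∈ I, Λ i • ((fun k => (p i k : ℝ)) + z)
            = ∑ i ∈ I, Λ i • (fun k => (p i k : ℝ)) + z := by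
          simp only [smul_add, Finset.sum_add_distrib, ← Finset.sum_smul, hΛsum, one_smul]
        rw [expand]
        funext k
        have hk := hbk k
        have hkR : (q k : ℝ) = ∑ i ∈ I, Λ i * (p i k : ℝ) + ∑ j, C j * (g j k : ℝ) := by
          simp only [hΛ, hC]
          exact_mod_cast hk
        simp only [Pi.add_apply, Finset.sum_apply, Pi.smul_apply, smul_eq_mul, hzdef]
        rw [hkR]
      rw [newtonPolyhedron, hkey, ← Finset.centerMass_eq_of_sum_1 _ _ hΛsum]
      refine Finset.centerMass_mem_convexHull I
        (fun i _ => by exact_mod_cast Rat.cast_nonneg.mpr (hlam (Sum.inl i)))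
        (by rw [hΛsum]; norm_num) (fun i hi => ?_)
      exact Set.mem_biUnion hi ⟨z, hz, rfl⟩
    · -- contradiction with the support inequalities
      exfalso
      set t : ℚ := y 0 with ht
      set w : Fin d → ℚ := fun k => y k.succ with hw
      have hpt : ∀ i ∈ I, 0 ≤ t + ∑ k, (p i k : ℚ) * w k := by
        intro i hi
        have := hy (Sum.inl i) (Finset.inl_mem_disjSum.mpr hi)
        simpa [dotp, Fin.sum_univ_succ, Fin.cons_zero, Fin.cons_succ] using this
      have hg : ∀ j, (0 : ℚ) ≤ ∑ k, (g j k : ℚ) * w k := by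
        intro j
        have := hy (Sum.inr j) (Finset.inr_mem_disjSum.mpr (Finset.mem_univ j))
        simpa [dotp, Fin.sum_univ_succ, Fin.cons_zero, Fin.cons_succ] using this
      have hqw : t + ∑ k, (q k : ℚ) * w k < 0 := by
        simpa [dotp, Fin.sum_univ_succ, Fin.cons_zero, Fin.cons_succ] using hby
      set M : ℤ := ∏ k, ((w k).den : ℤ) with hMdef
      have hM : 0 < M := Finset.prod_pos fun k _ => Int.natCast_pos.mpr (w k).pos
      set v : Fin d → ℤ := fun k => (w k).num * (M / ((w k).den : ℤ)) with hvdef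
      have hkey : ∀ k, (v k : ℚ) = (M : ℚ) * w k := by
        intro k
        obtain ⟨e, he⟩ : (((w k).den : ℤ)) ∣ M :=
          Finset.dvd_prod_of_mem _ (Finset.mem_univ k)
        have hdenz : (((w k).den : ℤ)) ≠ 0 := by
          exact_mod_cast (w k).den_nz
        have hveq : v k = (w k).num * e := by
          rw [hvdef]; dsimp only
          rw [he, Int.mul_ediv_cancel_left _ hdenz]
        have hden : (((w k).den : ℚ)) ≠ 0 := by exact_mod_cast (w k).den_nz
        have hnum : w k * (((w k).den : ℚ)) = ((w k).num : ℚ) := by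
          calc w k * ((w k).den : ℚ) = ((w k).num / (w k).den) * (w k).den := by
                rw [Rat.num_div_den]
            _ = ((w k).num : ℚ) := div_mul_cancel₀ _ hden
        rw [hveq]
        push_cast [he]
        rw [← hnum]
        ring
      have hMQ : (0 : ℚ) < (M : ℚ) := by exact_mod_cast hM
      have hvσ : ∀ x ∈ σ, 0 ≤ ∑ k, x k * (v k : ℝ) := by
        intro x hx
        rw [hσ] at hx
        obtain ⟨c, hc, rfl⟩ := hx
        have hgz : ∀ j, (0 : ℝ) ≤ ∑ k, (g j k : ℝ) * (v k : ℝ) := by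
          intro j
          have hQ : (0 : ℚ) ≤ ∑ k, (g j k : ℚ) * (v k : ℚ) := by
            have : ∑ k, (g j k : ℚ) * (v k : ℚ) = (M : ℚ) * ∑ k, (g j k : ℚ) * w k := by
              rw [Finset.mul_sum]
              exact Finset.sum_congr rfl fun k _ => by rw [hkey k]; ring
            rw [this]
            exact mul_nonneg hMQ.le (hg j)
          exact_mod_cast hQ
        calc (0:ℝ) ≤ ∑ j, c j * ∑ k, (g j k : ℝ) * (v k : ℝ) :=
              Finset.sum_nonneg fun j _ => mul_nonneg (hc j) (hgz j)
          _ = ∑ j, ∑ k, c j * ((g j k : ℝ) * (v k : ℝ)) := by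
              simp [Finset.mul_sum]
          _ = ∑ k, ∑ j, c j * ((g j k : ℝ) * (v k : ℝ)) := Finset.sum_comm
          _ = ∑ k, (∑ j, c j • (fun k' => (g j k' : ℝ))) k * (v k : ℝ) := by
              refine Finset.sum_congr rfl fun k _ => ?_
              simp [Finset.sum_mul, mul_assoc]
      have hineq := h v hvσ
      obtain ⟨i₀, hi₀, heq⟩ := Finset.exists_mem_eq_inf' hI (fun i => ∑ k, p i k * v k)
      rw [heq] at hineq
      have hQ : (∑ k, (p i₀ k : ℚ) * (v k : ℚ)) ≤ ∑ k, (q k : ℚ) * (v k : ℚ) := by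
        exact_mod_cast hineq
      have hp' : ∑ k, (p i₀ k : ℚ) * (v k : ℚ) = (M:ℚ) * ∑ k, (p i₀ k : ℚ) * w k := by
        rw [Finset.mul_sum]
        exact Finset.sum_congr rfl fun k _ => by rw [hkey k]; ring
      have hq' : ∑ k, (q k : ℚ) * (v k : ℚ) = (M:ℚ) * ∑ k, (q k : ℚ) * w k := by
        rw [Finset.mul_sum]
        exact Finset.sum_congr rfl fun k _ => by rw [hkey k]; ring
      rw [hp', hq'] at hQ
      have h1 := hpt i₀ hi₀
      nlinarith [mul_pos hMQ (by linarith :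
        (0:ℚ) < (∑ k, (p i₀ k : ℚ) * w k) - ∑ k, (q k : ℚ) * w k)]
end

section
/- Lattice membership via binomial equations: Let p_1,…,p_n and q be elements of ℤ^d. Then q belongs to the subgroup ℤp_1 + ⋯ + ℤp_n of ℤ^d if and only if for all a, a' ∈ (ℂ^*)^d, the implication holds: if a^{p_i} = a'^{p_i} for every i ∈ {1,…,n}, then a^q = a'^q. -/
open Complex in
noncomputable def expHom : ℚ →+ Additive ℂˣ where
  toFun x := Additive.ofMul (Units.mk0 (Complex.exp (2 * Real.pi * I * x)) (Complex.exp_ne_zero _))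
  map_zero' := by
    simp [Units.ext_iff]
  map_add' x y := by
    apply Additive.toMul.injective
    rw [Units.ext_iff]
    push_cast
    simp [mul_add, Complex.exp_add]

open Complex in
lemma expHom_eq_zero_iff (x : ℚ) : expHom x = 0 ↔ (x : ℚ) ∈ AddSubgroup.zmultiples (1 : ℚ) := by
  constructor
  · intro h
    have h1 : Complex.exp (2 * Real.pi * I * x) = 1 := by
      have := congrArg (fun u => ((Additive.toMul u : ℂˣ) : ℂ)) h
      simpa [expHom] using this
    rw [Complex.exp_eq_one_iff] at h1
    obtain ⟨n, hn⟩ := h1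
    refine ⟨n, ?_⟩
    have hpi : (2 * Real.pi * I : ℂ) ≠ 0 := by
      simp [Real.pi_ne_zero, Complex.I_ne_zero, mul_ne_zero]
    have : (x : ℂ) = (n : ℂ) := by
      exact mul_left_cancel₀ hpi (by linear_combination hn)
    have : (x : ℚ) = (n : ℚ) := by exact_mod_cast this
    simp [this]
  · rintro ⟨n, rfl⟩
    apply Additive.toMul.injective
    rw [Units.ext_iff]
    have : Complex.exp (2 * Real.pi * I * ((n • (1:ℚ) : ℚ) : ℂ)) = 1 := by
      rw [Complex.exp_eq_one_iff]
      exact ⟨n, by push_cast [zsmul_eq_mul]; ring⟩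
    simpa [expHom] using this

noncomputable def circleChar : AddCircle (1 : ℚ) →+ Additive ℂˣ :=
  QuotientAddGroup.lift _ expHom (fun x hx => (expHom_eq_zero_iff x).2 hx)

lemma circleChar_eq_zero_iff (x : AddCircle (1 : ℚ)) : circleChar x = 0 ↔ x = 0 := by
  induction x using QuotientAddGroup.induction_on with
  | H x =>
    rw [show (circleChar (x : AddCircle (1:ℚ))) = expHom x from rfl,
      expHom_eq_zero_iff, ← QuotientAddGroup.eq_zero_iff]

lemma prod_zpow_eq {d : ℕ} (χ : (Fin d → ℤ) →+ Additive ℂˣ) (m : Fin d → ℤ) :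
    (∏ k, (Additive.toMul (χ (Pi.single k 1))) ^ m k) = Additive.toMul (χ m) := by
  conv_rhs => rw [← Finset.univ_sum_single m, map_sum]
  rw [toMul_sum]
  refine Finset.prod_congr rfl fun k _ => ?_
  have : Pi.single k (m k) = m k • (Pi.single k 1 : Fin d → ℤ) := by
    have := Pi.single_smul' (β := ℤ) k (m k) 1
    rw [smul_eq_mul, mul_one] at this
    exact this
  rw [this, map_zsmul, toMul_zsmul]

/-- **Lattice membership via binomial equations.**
For `p 1, …, p n, q ∈ ℤ^d`, `q` belongs to the subgroup `ℤ p 1 + ⋯ + ℤ p n` of `ℤ^d`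
if and only if for all `a, a' ∈ (ℂ*)^d`, whenever `a ^ (p i) = a' ^ (p i)` for every
`i`, also `a ^ q = a' ^ q`, where `a ^ p := ∏ k, (a k) ^ (p k)`. -/
theorem mem_lattice_iff_binomial_equations
    {d n : ℕ} (p : Fin n → (Fin d → ℤ)) (q : Fin d → ℤ) :
    q ∈ AddSubgroup.closure (Set.range p) ↔
      ∀ a a' : Fin d → ℂˣ,
        (∀ i : Fin n, (∏ k, a k ^ p i k) = ∏ k, a' k ^ p i k) →
        (∏ k, a k ^ q k) = ∏ k, a' k ^ q k := by
  constructor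
  · intro hq a a' h
    induction hq using AddSubgroup.closure_induction with
    | mem x hx => obtain ⟨i, rfl⟩ := hx; exact h i
    | zero => simp
    | add x y hx hy ihx ihy =>
      simp only [Pi.add_apply, zpow_add, Finset.prod_mul_distrib, ihx, ihy]
    | neg x hx ihx =>
      simp only [Pi.neg_apply, zpow_neg]
      rw [Finset.prod_inv_distrib, Finset.prod_inv_distrib, ihx]
  · intro H
    by_contra hq
    set L := AddSubgroup.closure (Set.range p) with hL
    have hq' : (QuotientAddGroup.mk q : (Fin d → ℤ) ⧸ L) ≠ 0 := by
      rwa [Ne, QuotientAddGroup.eq_zero_iff]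
    obtain ⟨c, hc⟩ := CharacterModule.exists_character_apply_ne_zero_of_ne_zero hq'
    set χ : (Fin d → ℤ) →+ Additive ℂˣ :=
      circleChar.comp ((c : ((Fin d → ℤ) ⧸ L) →+ AddCircle (1:ℚ)).comp
        (QuotientAddGroup.mk' L)) with hχ
    have key : (∏ k, (Additive.toMul (χ (Pi.single k 1))) ^ q k) = 1 := by
      refine (H (fun k => Additive.toMul (χ (Pi.single k 1))) 1 fun i => ?_).trans (by simp)
      rw [prod_zpow_eq]
      have hpi : χ (p i) = 0 := by
        have : (QuotientAddGroup.mk (p i) : (Fin d → ℤ) ⧸ L) = 0 := by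
          rw [QuotientAddGroup.eq_zero_iff]
          exact AddSubgroup.subset_closure ⟨i, rfl⟩
        show circleChar (c (QuotientAddGroup.mk (p i))) = 0; simp [this]
      rw [hpi]
      simp
    rw [prod_zpow_eq] at key
    have : χ q = 0 := Additive.toMul.injective key
    rw [hχ] at this
    simp only [AddMonoidHom.comp_apply, QuotientAddGroup.mk'_apply] at this
    rw [circleChar_eq_zero_iff] at this
    exact hc this
end

section
/- Criterion for non-membership in the Lipschitz saturation (arc form): Let δ_1,…,δ_m ∈ ℤ^d, let σ ⊆ ℝ^d be the convex cone generated by δ_1,…,δ_m, and let π : ℕ^m → ℤ^d be given by π(p) = Σ_k p_k δ_k. Let p_1,…,p_n ∈ ℕ^m and q ∈ ℕ^m. Suppose there exists a subset I ⊆ {1,…,n} such that π(q) ∉ N_σ(π(p_i) | i ∈ I) and q does not belong to the subgroup of ℤ^m generated by {p_i | i ∉ I}. Then there exist v ∈ ℤ^d with ⟨δ_k, v⟩ ≥ 0 for all k, and a, a' ∈ (ℂ^*)^m, such that the power series φ_k := a_k · t^{⟨δ_k,v⟩} and φ'_k := a'_k · t^{⟨δ_k,v⟩} in ℂ⟦t⟧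 satisfy ord(φ^q − (φ')^q) < min_{1≤i≤n} ord(φ^{p_i} − (φ')^{p_i}). (In the paper this witness, via the valuative criterion for integral closure, shows that the monomial x^{π(q)} does not belong to the Lipschitz saturation of the toric singularity with semigroup generated by the π(p_i).) -/
open Matrix Finset

lemma myFarkas {e : ℕ} : ∀ (N : ℕ) (g : Fin N → (Fin e → ℚ)) (b : Fin e → ℚ),
    (∃ c : Fin N → ℚ, (∀ i, 0 ≤ c i) ∧ b = ∑ i, c i • g i) ∨
    (∃ v : Fin e → ℚ, (∀ i, 0 ≤ g i ⬝ᵥ v) ∧ b ⬝ᵥ v < 0) := by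
  intro N
  induction N with
  | zero =>
    intro g b
    by_cases hb : b = 0
    · exact Or.inl ⟨0, fun i => le_refl _, by simp [hb]⟩
    · refine Or.inr ⟨-b, fun i => i.elim0, ?_⟩
      rw [dotProduct_neg, neg_lt_zero]
      refine Finset.sum_pos' (fun i _ => mul_self_nonneg _) ?_
      obtain ⟨i, hi⟩ := Function.ne_iff.1 hb
      exact ⟨i, Finset.mem_univ _, mul_self_pos.2 hi⟩
  | succ N IH =>
    intro g b
    set g0 := g 0 with hg0
    set G : Fin N → (Fin e → ℚ) := fun i => g i.succ with hG
    rcases IH G b with ⟨c, hc, hb⟩ | ⟨v, hv, hbv⟩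
    · refine Or.inl ⟨Fin.cons 0 c, ?_, ?_⟩
      · intro i
        refine Fin.cases ?_ ?_ i
        · simp
        · intro j; simpa using hc j
      · rw [Fin.sum_univ_succ]
        simpa using hb
    · by_cases h0 : 0 ≤ g0 ⬝ᵥ v
      · exact Or.inr ⟨v, fun i => Fin.cases h0 hv i, hbv⟩
      push_neg at h0
      have hg0v : g0 ⬝ᵥ v ≠ 0 := ne_of_lt h0
      set r : (Fin e → ℚ) → ℚ := fun x => (x ⬝ᵥ v) / (g0 ⬝ᵥ v) with hr
      set hat : (Fin e → ℚ) → (Fin e → ℚ) := fun x => x - r x • g0 with hhat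
      rcases IH (fun i => hat (G i)) (hat b) with ⟨c, hc, hb⟩ | ⟨w, hw, hbw⟩
      · -- membership case
        set μ : ℚ := r b - ∑ i, c i * r (G i) with hμ
        have hbsum : b = ∑ i, c i • G i + μ • g0 := by
          have h1 : hat b = ∑ i, c i • G i - (∑ i, c i * r (G i)) • g0 := by
            rw [hb]
            simp only [hhat, smul_sub, Finset.sum_sub_distrib, smul_smul, Finset.sum_smul]
          have h2 : b = hat b + r b • g0 := by simp [hhat]
          rw [h2, h1, hμ, sub_smul]
          abel
        have hμ0 : 0 ≤ μ := by
          have h3 : 0 ≤ -∑ i, c i * r (G i) := by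
            rw [neg_nonneg]
            refine Finset.sum_nonpos fun i _ => mul_nonpos_of_nonneg_of_nonpos (hc i) ?_
            exact div_nonpos_of_nonneg_of_nonpos (hv i) (le_of_lt h0)
          have h4 : 0 < r b := div_pos_of_neg_of_neg hbv h0
          have := add_pos_of_pos_of_nonneg h4 h3
          rw [hμ]; linarith
        refine Or.inl ⟨Fin.cons μ c, ?_, ?_⟩
        · intro i
          refine Fin.cases ?_ ?_ i
          · simpa using hμ0
          · intro j; simpa using hc j
        · rw [Fin.sum_univ_succ]
          simp only [Fin.cons_zero, Fin.cons_succ]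
          rw [hbsum]; abel
      · -- separating vector case
        set u : Fin e → ℚ := w - ((g0 ⬝ᵥ w) / (g0 ⬝ᵥ v)) • v with hu
        have key : ∀ x : Fin e → ℚ, x ⬝ᵥ u = hat x ⬝ᵥ w := by
          intro x
          simp only [hu, hhat, hr, dotProduct_sub, sub_dotProduct, dotProduct_smul,
            smul_dotProduct, smul_eq_mul]
          field_simp
        refine Or.inr ⟨u, ?_, ?_⟩
        · intro i
          refine Fin.cases ?_ ?_ i
          · rw [show g 0 ⬝ᵥ u = g0 ⬝ᵥ u from rfl, key, hhat]
            simp only [sub_dotProduct, smul_dotProduct, smul_eq_mul, hr]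
            field_simp
            simp
          · intro j
            rw [show g j.succ ⬝ᵥ u = G j ⬝ᵥ u from rfl, key]
            exact hw j
        · rw [key]; exact hbw

noncomputable section

def qexpUnit (x : ℚ) : ℂˣ :=
  Units.mk0 (Complex.exp (2 * Real.pi * Complex.I * x)) (Complex.exp_ne_zero _)

lemma qexpUnit_add (x y : ℚ) : qexpUnit (x + y) = qexpUnit x * qexpUnit y := by
  ext
  simp only [qexpUnit, Units.val_mk0, Units.val_mul, ← Complex.exp_add]
  congr 1
  push_cast
  ring

lemma two_pi_I_ne_zero : (2 * Real.pi * Complex.I : ℂ) ≠ 0 := by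
  simp [Real.pi_ne_zero, Complex.I_ne_zero]

lemma qexpUnit_eq_one_iff (x : ℚ) : qexpUnit x = 1 ↔ ∃ n : ℤ, (n : ℚ) = x := by
  rw [Units.ext_iff]
  simp only [qexpUnit, Units.val_mk0, Units.val_one, Complex.exp_eq_one_iff]
  constructor
  · rintro ⟨n, hn⟩
    refine ⟨n, ?_⟩
    have : (x : ℂ) = (n : ℂ) := by
      have h2 := hn
      rw [show (n : ℂ) * (2 * Real.pi * Complex.I) = (2 * Real.pi * Complex.I) * n by ring] at h2
      exact mul_left_cancel₀ two_pi_I_ne_zero h2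
    exact_mod_cast this.symm
  · rintro ⟨n, hn⟩
    exact ⟨n, by rw [← hn]; push_cast; ring⟩

def qexpHom : ℚ →+ Additive ℂˣ :=
  AddMonoidHom.mk' (fun x => Additive.ofMul (qexpUnit x)) (by
    intro x y
    simp [qexpUnit_add])

def circChar : AddCircle (1 : ℚ) →+ Additive ℂˣ :=
  QuotientAddGroup.lift (AddSubgroup.zmultiples (1 : ℚ)) qexpHom (by
    intro x hx
    obtain ⟨n, hn⟩ := AddSubgroup.mem_zmultiples_iff.1 hx
    have hx' : x = (n : ℚ) := by rw [← hn]; simp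
    show Additive.ofMul (qexpUnit x) = 0
    rw [show (0 : Additive ℂˣ) = Additive.ofMul (1 : ℂˣ) from rfl]
    congr 1
    rw [qexpUnit_eq_one_iff]
    exact ⟨n, hx'.symm⟩)

lemma circChar_eq_zero {y : AddCircle (1 : ℚ)} (h : circChar y = 0) : y = 0 := by
  induction y using QuotientAddGroup.induction_on with
  | H x =>
    have hx : circChar (QuotientAddGroup.mk x) = Additive.ofMul (qexpUnit x) := rfl
    rw [hx] at h
    have : qexpUnit x = 1 := h
    obtain ⟨n, hn⟩ := (qexpUnit_eq_one_iff x).1 this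
    refine (QuotientAddGroup.eq_zero_iff x).2 ?_
    exact AddSubgroup.mem_zmultiples_iff.2 ⟨n, by rw [← hn]; simp⟩

lemma exists_char {m : ℕ} (H : AddSubgroup (Fin m → ℤ)) (q : Fin m → ℤ) (hq : q ∉ H) :
    ∃ χ : (Fin m → ℤ) →+ Additive ℂˣ, (∀ x ∈ H, χ x = 0) ∧ χ q ≠ 0 := by
  set A := (Fin m → ℤ) ⧸ H
  have hq' : (QuotientAddGroup.mk' H q : A) ≠ 0 := by
    show ¬ ((q : A) = 0)
    rw [QuotientAddGroup.eq_zero_iff]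
    exact hq
  obtain ⟨c, hc⟩ := CharacterModule.exists_character_apply_ne_zero_of_ne_zero hq'
  refine ⟨circChar.comp ((show A →+ AddCircle (1:ℚ) from c).comp (QuotientAddGroup.mk' H)), ?_, ?_⟩
  · intro x hx
    have h0 : (QuotientAddGroup.mk' H x : A) = 0 := (QuotientAddGroup.eq_zero_iff x).2 hx
    simp only [AddMonoidHom.comp_apply, h0]
    have : (show A →+ AddCircle (1:ℚ) from c) 0 = 0 := map_zero _
    exact (congrArg circChar ((congrArg (show A →+ AddCircle (1:ℚ) from c) h0).trans this)).trans (map_zero _)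
  · intro hcon
    exact hc (by
      have := circChar_eq_zero hcon
      exact this)

lemma prod_pow_char {m : ℕ} (χ : (Fin m → ℤ) →+ Additive ℂˣ) (w : Fin m → ℕ) :
    ∏ k, (Additive.toMul (χ (Pi.single k 1))) ^ (w k)
      = Additive.toMul (χ (fun k => (w k : ℤ))) := by
  have h1 : (fun k => (w k : ℤ)) = ∑ k : Fin m, (w k : ℤ) • Pi.single k (1 : ℤ) := by
    rw [show (fun k => (w k : ℤ)) = ∑ k : Fin m, Pi.single k ((w k : ℤ)) from
      (Finset.univ_sum_single _).symm]
    congr 1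
    funext k
    funext k'
    simp [Pi.single_apply, Pi.smul_apply]
  rw [h1, map_sum, toMul_sum]
  refine Finset.prod_congr rfl fun k _ => ?_
  rw [map_zsmul]
  rw [show Additive.toMul ((w k : ℤ) • χ (Pi.single k 1))
      = (Additive.toMul (χ (Pi.single k 1))) ^ ((w k : ℤ)) from rfl, zpow_natCast]

open PowerSeries in
lemma prod_phi {m : ℕ} (a : Fin m → ℂˣ) (e : Fin m → ℕ) (φ : Fin m → PowerSeries ℂ)
    (hφ : ∀ k, φ k = PowerSeries.C (a k : ℂ) * PowerSeries.X ^ (e k)) (w : Fin m → ℕ) :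
    ∏ k, φ k ^ w k
      = PowerSeries.monomial (∑ k, e k * w k) (∏ k, (a k : ℂ) ^ w k) := by
  simp_rw [hφ, mul_pow, ← pow_mul]
  rw [Finset.prod_mul_distrib]
  simp_rw [← map_pow]
  rw [← map_prod, Finset.prod_pow_eq_pow_sum]
  rw [X_pow_eq, ← smul_eq_C_mul, ← _root_.map_smul, smul_eq_mul, mul_one]

open PowerSeries in
lemma order_diff {z z' : ℂ} {E : ℕ} :
    PowerSeries.order (PowerSeries.monomial E z - PowerSeries.monomial E z')
      = if z = z' then ⊤ else (E : ℕ∞) := by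
  rw [← map_sub]
  classical
  rw [order_monomial]
  simp [sub_eq_zero]

end

open PowerSeries Finset

lemma exists_int_vector {d m n : ℕ} (δ : Fin m → (Fin d → ℤ))
    (π : (Fin m → ℕ) → (Fin d → ℤ))
    (σ : Set (Fin d → ℝ))
    (hσ : σ = {x : Fin d → ℝ | ∃ c : Fin m → ℝ,
        (∀ k, 0 ≤ c k) ∧ x = ∑ k, c k • (fun j => (δ k j : ℝ))})
    (p : Fin n → (Fin m → ℕ)) (q : Fin m → ℕ)
    (I : Finset (Fin n))
    (hq1 : (fun j => (π q j : ℝ)) ∉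
        convexHull ℝ (⋃ i ∈ I, (fun z => (fun j => (π (p i) j : ℝ)) + z) '' σ)) :
    ∃ z : Fin d → ℤ, (∀ k, 0 ≤ ∑ j, δ k j * z j) ∧
      (∀ i ∈ I, ∑ j, π q j * z j < ∑ j, π (p i) j * z j) := by
  classical
  set Dq : Fin m → Fin d → ℚ := fun k j => (δ k j : ℚ) with hDq
  set Pq : Fin n → Fin d → ℚ := fun i j => (π (p i) j : ℚ) with hPq
  set Qq : Fin d → ℚ := fun j => (π q j : ℚ) with hQq
  set g : Fin (n + m) → (Fin (d+1) → ℚ) :=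
    Fin.addCases (fun i => if i ∈ I then Fin.snoc (Pq i) 1 else 0)
      (fun k => Fin.snoc (Dq k) 0) with hg
  rcases myFarkas (n+m) g (Fin.snoc Qq 1) with ⟨c, hc, hbc⟩ | ⟨v', hv', hbv'⟩
  · -- contradiction with hq1
    exfalso
    rw [Fin.sum_univ_add] at hbc
    simp only [hg, Fin.addCases_left, Fin.addCases_right] at hbc
    -- coordinates
    have hlast : (1 : ℚ) = ∑ i : Fin n, (if i ∈ I then c (Fin.castAdd m i) else 0) := by
      have := congrFun hbc (Fin.last d)
      simp only [Fin.snoc_last, Finset.sum_apply, Pi.add_apply, Pi.smul_apply,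
        smul_eq_mul] at this
      rw [this]
      simp [apply_ite (fun f : Fin (d+1) → ℚ => f (Fin.last d)), mul_ite]
    have hcoord : ∀ jj : Fin d, Qq jj =
        (∑ i : Fin n, (if i ∈ I then c (Fin.castAdd m i) * Pq i jj else 0)) +
          ∑ k : Fin m, c (Fin.natAdd n k) * Dq k jj := by
      intro jj
      have := congrFun hbc jj.castSucc
      simp only [Fin.snoc_castSucc, Finset.sum_apply, Pi.add_apply, Pi.smul_apply,
        smul_eq_mul] at this
      rw [this]
      congr 1
      refine Finset.sum_congr rfl fun i _ => ?_
      by_cases hiI : i ∈ I <;> simp [hiI]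
    -- find i₀ ∈ I with positive coefficient
    obtain ⟨i₀, -, hi₀⟩ := Finset.exists_ne_zero_of_sum_ne_zero
      (f := fun i : Fin n => if i ∈ I then c (Fin.castAdd m i) else 0)
      (by rw [← hlast]; norm_num)
    have hi₀I : i₀ ∈ I := by by_contra h; simp [h] at hi₀
    rw [if_pos hi₀I] at hi₀
    have hi₀pos : 0 < c (Fin.castAdd m i₀) := lt_of_le_of_ne (hc _) (Ne.symm hi₀)
    -- real data
    set wR : Fin n → ℝ := fun i => if i ∈ I then ((c (Fin.castAdd m i) : ℚ) : ℝ) else 0 with hwR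
    set TR : Fin d → ℝ := ∑ k : Fin m, ((c (Fin.natAdd n k) : ℚ) : ℝ) • (fun j => (δ k j : ℝ))
      with hTR
    set zpt : Fin n → (Fin d → ℝ) := fun i => (fun j => ((π (p i) j : ℝ)))
      + (if i = i₀ then (wR i₀)⁻¹ • TR else 0) with hzpt
    have hwR0 : ∀ i ∈ I, (0:ℝ) ≤ wR i := by
      intro i hi
      rw [hwR]
      simp only [if_pos hi]
      exact_mod_cast hc _
    have hwRi₀ : (0:ℝ) < wR i₀ := by
      rw [hwR]; simp only [if_pos hi₀I]; exact_mod_cast hi₀pos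
    have hwR1 : ∑ i ∈ I, wR i = 1 := by
      have h' : ((1:ℚ):ℝ) = ((∑ i : Fin n, (if i ∈ I then c (Fin.castAdd m i) else 0) : ℚ) : ℝ) :=
        congrArg (fun r : ℚ => (r : ℝ)) hlast
      push_cast [apply_ite (fun r : ℚ => (r : ℝ))] at h'
      rw [show ∑ i ∈ I, wR i = ∑ i ∈ I, ((c (Fin.castAdd m i) : ℚ) : ℝ) from
        Finset.sum_congr rfl fun i hi => by simp [hwR, hi]]
      rw [← Fintype.sum_ite_mem I (fun i => ((c (Fin.castAdd m i) : ℚ) : ℝ))]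
      exact h'.symm
    have hzmem : ∀ i ∈ I, zpt i ∈ ⋃ i ∈ I, (fun z => (fun j => ((π (p i) j : ℝ))) + z) '' σ := by
      intro i hi
      refine Set.mem_biUnion hi ⟨if i = i₀ then (wR i₀)⁻¹ • TR else 0, ?_, rfl⟩
      by_cases hii : i = i₀
      · rw [if_pos hii, hσ]
        refine ⟨fun k => (wR i₀)⁻¹ * ((c (Fin.natAdd n k) : ℚ) : ℝ), fun k => ?_, ?_⟩
        · exact mul_nonneg (inv_nonneg.2 hwRi₀.le) (by exact_mod_cast hc _)
        · rw [hTR, Finset.smul_sum]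
          refine Finset.sum_congr rfl fun k _ => ?_
          rw [smul_smul]
      · rw [if_neg hii, hσ]
        exact ⟨0, fun k => le_refl 0, by simp⟩
    have hsum : ∑ i ∈ I, wR i • zpt i = (fun j => ((π q j : ℝ))) := by
      have hTRsplit : ∑ i ∈ I, wR i • zpt i
          = (∑ i ∈ I, wR i • (fun j => ((π (p i) j : ℝ)))) + TR := by
        rw [hzpt]
        simp only [smul_add]
        rw [Finset.sum_add_distrib]
        congr 1
        have : ∀ i ∈ I, wR i • (if i = i₀ then (wR i₀)⁻¹ • TR else 0)
            = if i = i₀ then wR i₀ • (wR i₀)⁻¹ • TR else 0 := by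
          intro i _
          by_cases hii : i = i₀ <;> simp [hii]
        rw [Finset.sum_congr rfl this, Finset.sum_ite_eq' I i₀
          (fun _ => wR i₀ • (wR i₀)⁻¹ • TR), if_pos hi₀I, smul_smul,
          mul_inv_cancel₀ hwRi₀.ne', one_smul]
      rw [hTRsplit]
      funext j
      have hc' := congrArg (fun r : ℚ => (r : ℝ)) (hcoord j)
      push_cast [apply_ite (fun r : ℚ => (r : ℝ))] at hc'
      simp only [Pi.add_apply, Finset.sum_apply, Pi.smul_apply, smul_eq_mul, hTR]
      rw [show ∑ i ∈ I, wR i * ((π (p i) j : ℝ))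
          = ∑ i ∈ I, ((c (Fin.castAdd m i) : ℚ) : ℝ) * ((π (p i) j : ℝ)) from
        Finset.sum_congr rfl fun i hi => by simp [hwR, hi]]
      rw [← Fintype.sum_ite_mem I
        (fun i => ((c (Fin.castAdd m i) : ℚ) : ℝ) * ((π (p i) j : ℝ)))]
      exact hc'.symm
    have key := Finset.centerMass_mem_convexHull I hwR0 (by rw [hwR1]; norm_num) hzmem
    rw [Finset.centerMass_eq_of_sum_1 _ _ hwR1, hsum] at key
    exact hq1 key
  · -- extract the integer vector
    set vq : Fin d → ℚ := fun j => v' j.castSucc with hvq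
    have hdot : ∀ (x : Fin d → ℚ) (t : ℚ),
        Fin.snoc x t ⬝ᵥ v' = (∑ j, x j * vq j) + t * v' (Fin.last d) := by
      intro x t
      rw [dotProduct, Fin.sum_univ_castSucc]
      simp [hvq]
    have hD : ∀ k, 0 ≤ ∑ j, Dq k j * vq j := by
      intro k
      have h1 := hv' (Fin.natAdd n k)
      simp only [hg, Fin.addCases_right] at h1
      rw [hdot] at h1
      simpa using h1
    have hPQ : ∀ i ∈ I, (∑ j, Qq j * vq j) < ∑ j, Pq i j * vq j := by
      intro i hi
      have h1 := hv' (Fin.castAdd m i)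
      simp only [hg, Fin.addCases_left, if_pos hi] at h1
      rw [hdot] at h1
      have h2 := hbv'
      rw [hdot] at h2
      linarith
    set M : ℕ := ∏ j, (vq j).den with hM
    have hMpos : (0:ℚ) < (M:ℚ) := by
      rw [hM]
      push_cast
      exact Finset.prod_pos fun j _ => by exact_mod_cast (vq j).pos
    set z : Fin d → ℤ := fun j => (vq j).num * ∏ j' ∈ Finset.univ.erase j, ((vq j').den : ℤ)
      with hzdef
    have hzc : ∀ j, ((z j : ℚ)) = (M:ℚ) * vq j := by
      intro j
      have hden : ((vq j).den : ℚ) ≠ 0 := by exact_mod_cast (vq j).den_nz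
      have hnum : ((vq j).num : ℚ) = vq j * ((vq j).den : ℚ) :=
        (div_eq_iff hden).1 (Rat.num_div_den (vq j))
      rw [hzdef, hM]
      push_cast
      rw [← Finset.mul_prod_erase Finset.univ (fun j' => ((vq j').den : ℚ))
        (Finset.mem_univ j), hnum]
      ring
    refine ⟨z, ?_, ?_⟩
    · intro k
      have hk : (0:ℚ) ≤ ∑ j, Dq k j * (z j : ℚ) := by
        have : ∑ j, Dq k j * (z j:ℚ) = (M:ℚ) * ∑ j, Dq k j * vq j := by
          rw [Finset.mul_sum]
          refine Finset.sum_congr rfl fun j _ => ?_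
          rw [hzc j]; ring
        rw [this]
        exact mul_nonneg hMpos.le (hD k)
      have : (0:ℚ) ≤ ((∑ j, δ k j * z j : ℤ) : ℚ) := by
        push_cast
        exact hk
      exact_mod_cast this
    · intro i hi
      have hk : ∑ j, Qq j * (z j : ℚ) < ∑ j, Pq i j * (z j : ℚ) := by
        have e1 : ∑ j, Qq j * (z j:ℚ) = (M:ℚ) * ∑ j, Qq j * vq j := by
          rw [Finset.mul_sum]
          refine Finset.sum_congr rfl fun j _ => ?_
          rw [hzc j]; ring
        have e2 : ∑ j, Pq i j * (z j:ℚ) = (M:ℚ) * ∑ j, Pq i j * vq j := by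
          rw [Finset.mul_sum]
          refine Finset.sum_congr rfl fun j _ => ?_
          rw [hzc j]; ring
        rw [e1, e2]
        exact mul_lt_mul_of_pos_left (hPQ i hi) hMpos
      have : ((∑ j, π q j * z j : ℤ) : ℚ) < ((∑ j, π (p i) j * z j : ℤ) : ℚ) := by
        push_cast
        exact hk
      exact_mod_cast this

/-- **Criterion for non-membership in the Lipschitz saturation (arc form).**
Let `δ 1, …, δ m ∈ ℤ^d`, let `σ` be the convex cone they generate in `ℝ^d`, and let
`π : ℕ^m → ℤ^d`, `π p = ∑ k, p k • δ k`.  If there is a subset `I ⊆ {1,…,n}` with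
`π q ∉ N_σ(π (p i) | i ∈ I)` and `q` not in the subgroup of `ℤ^m` generated by
`{p i | i ∉ I}`, then there are `v ∈ σ^∨ ∩ ℤ^d` and `a, a' ∈ (ℂ*)^m` such that the
monomial arcs `φ k = a k • t ^ ⟨δ k, v⟩`, `φ' k = a' k • t ^ ⟨δ k, v⟩` satisfy
`ord(φ^q − (φ')^q) < min_i ord(φ^(p i) − (φ')^(p i))`. -/
theorem not_mem_lipschitz_saturation_criterion
    {d m n : ℕ} (δ : Fin m → (Fin d → ℤ))
    (π : (Fin m → ℕ) → (Fin d → ℤ))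
    (hπ : ∀ p : Fin m → ℕ, π p = ∑ k, (p k : ℤ) • δ k)
    (σ : Set (Fin d → ℝ))
    (hσ : σ = {x : Fin d → ℝ | ∃ c : Fin m → ℝ,
        (∀ k, 0 ≤ c k) ∧ x = ∑ k, c k • (fun j => (δ k j : ℝ))})
    (p : Fin n → (Fin m → ℕ)) (q : Fin m → ℕ)
    (I : Finset (Fin n))
    (hq1 : (fun j => (π q j : ℝ)) ∉
        convexHull ℝ (⋃ i ∈ I, (fun z => (fun j => (π (p i) j : ℝ)) + z) '' σ))
    (hq2 : (fun k => (q k : ℤ)) ∉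
        AddSubgroup.closure {x : Fin m → ℤ | ∃ i ∉ I, x = fun k => (p i k : ℤ)}) :
    ∃ v : Fin d → ℤ, (∀ k : Fin m, 0 ≤ ∑ j, δ k j * v j) ∧
      ∃ a a' : Fin m → ℂˣ,
        ∀ φ φ' : Fin m → PowerSeries ℂ,
          (∀ k, φ k = PowerSeries.C (a k : ℂ) *
              PowerSeries.X ^ (∑ j, δ k j * v j).toNat) →
          (∀ k, φ' k = PowerSeries.C (a' k : ℂ) *
              PowerSeries.X ^ (∑ j, δ k j * v j).toNat) →
          PowerSeries.order ((∏ k, φ k ^ q k) - ∏ k, φ' k ^ q k) <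
            Finset.univ.inf (fun i : Fin n =>
              PowerSeries.order ((∏ k, φ k ^ p i k) - ∏ k, φ' k ^ p i k)) := by
  classical
  obtain ⟨z, hz1, hz2⟩ := exists_int_vector δ π σ hσ p q I hq1
  refine ⟨z, hz1, ?_⟩
  -- Step 2 : the character
  obtain ⟨χ, hχ1, hχ2⟩ := exists_char
    (AddSubgroup.closure {x : Fin m → ℤ | ∃ i ∉ I, x = fun k => (p i k : ℤ)})
    (fun k => (q k : ℤ)) hq2
  set a : Fin m → ℂˣ := fun k => Additive.toMul (χ (Pi.single k 1)) with ha
  refine ⟨a, fun _ => 1, ?_⟩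
  intro φ φ' hφ hφ'
  set e : Fin m → ℕ := fun k => (∑ j, δ k j * z j).toNat with he
  -- coefficients
  have coef : ∀ w : Fin m → ℕ, ∏ k, ((a k : ℂ)) ^ w k
      = ((Additive.toMul (χ (fun k => (w k : ℤ))) : ℂˣ) : ℂ) := by
    intro w
    simp_rw [← Units.val_pow_eq_pow_val]
    rw [← Units.coe_prod]
    congr 1
    exact prod_pow_char χ w
  -- the exponents
  have hE : ∀ w : Fin m → ℕ, ((∑ k, e k * w k : ℕ) : ℤ) = ∑ j, π w j * z j := by
    intro w
    have hπj : ∀ j, π w j = ∑ k, (w k : ℤ) * δ k j := by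
      intro j
      rw [hπ w]
      simp [Finset.sum_apply]
    have he' : ∀ k, ((e k : ℕ) : ℤ) = ∑ j, δ k j * z j := fun k =>
      Int.toNat_of_nonneg (hz1 k)
    push_cast
    rw [show ∑ k, ((e k :ℕ) : ℤ) * (w k : ℤ) = ∑ k, (∑ j, δ k j * z j) * (w k : ℤ) from
      Finset.sum_congr rfl fun k _ => by rw [he']]
    simp_rw [hπj, Finset.sum_mul]
    rw [Finset.sum_comm]
    refine Finset.sum_congr rfl fun k _ => Finset.sum_congr rfl fun j _ => by ring
  -- the products
  have hprod : ∀ w : Fin m → ℕ, ∏ k, φ k ^ w k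
      = PowerSeries.monomial (∑ k, e k * w k)
          ((Additive.toMul (χ (fun k => (w k : ℤ))) : ℂˣ) : ℂ) := by
    intro w
    rw [prod_phi a e φ hφ w, coef w]
  have hprod' : ∀ w : Fin m → ℕ, ∏ k, φ' k ^ w k
      = PowerSeries.monomial (∑ k, e k * w k) 1 := by
    intro w
    rw [prod_phi (fun _ => 1) e φ' hφ' w]
    simp
  -- the orders
  have hqcoef : ((Additive.toMul (χ (fun k => (q k : ℤ))) : ℂˣ) : ℂ) ≠ 1 := by
    intro hcon
    apply hχ2
    have : (Additive.toMul (χ (fun k => (q k : ℤ))) : ℂˣ) = 1 := Units.ext hcon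
    rwa [toMul_eq_one] at this
  have hordq : PowerSeries.order ((∏ k, φ k ^ q k) - ∏ k, φ' k ^ q k)
      = ((∑ k, e k * q k : ℕ) : ℕ∞) := by
    rw [hprod q, hprod' q, order_diff, if_neg hqcoef]
  rw [hordq]
  rw [Finset.lt_inf_iff (by exact_mod_cast WithTop.coe_lt_top _)]
  intro i _
  rw [hprod (p i), hprod' (p i), order_diff]
  by_cases hiI : i ∈ I
  · have hlt : (∑ k, e k * q k) < ∑ k, e k * p i k := by
      have := hz2 i hiI
      have h1 := hE q
      have h2 := hE (p i)
      omega
    split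
    · exact_mod_cast WithTop.coe_lt_top _
    · exact_mod_cast hlt
  · have : χ (fun k => ((p i k : ℤ))) = 0 :=
      hχ1 _ (AddSubgroup.subset_closure ⟨i, hiI, rfl⟩)
    rw [if_pos]
    · exact_mod_cast WithTop.coe_lt_top _
    · rw [this]
      simp
end

section
/- Monomials over the non-jumping Newton polyhedron satisfy the valuative inequality: Let v, v' ∈ ℕ^m, a, a' ∈ (ℂ^*)^m, and ψ_k, ψ'_k ∈ ℂ⟦t⟧ with zero constant term; set φ_k = a_k t^{v_k}(1+ψ_k) and φ'_k = a'_k t^{v'_k}(1+ψ'_k). Let p_1,…,p_n ∈ ℕ^m and define M := { i ∈ {1,…,n} : ord(φ^{p_i} − (φ')^{p_i}) = min(⟨p_i,v⟩, ⟨p_i,v'⟩) }. If q ∈ ℕ^m lies (as a point of ℝ^m) in the Newton polyhedron N(p_i | i ∈ M), then ord(φ^q − (φ')^q) ≥ min_{1≤i≤n} ord(φ^{p_i} − (φ')^{p_i}). -/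
open PowerSeries Finset

private lemma psOrder_eq_zero {f : PowerSeries ℂ} (h : PowerSeries.constantCoeff f ≠ 0) :
    f.order = 0 := by
  have : f.order = (0 : ℕ) := order_eq_nat.mpr ⟨by simpa using h, by simp⟩
  simpa using this

private lemma psOrder_prod {ι : Type*} (s : Finset ι) (f : ι → PowerSeries ℂ) :
    (∏ k ∈ s, f k).order = ∑ k ∈ s, (f k).order := by
  classical
  induction s using Finset.cons_induction with
  | empty => simp [order_one]
  | cons i s hi ih => rw [Finset.prod_cons, Finset.sum_cons, order_mul, ih]

private lemma psOrder_pow (f : PowerSeries ℂ) (n : ℕ) :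
    (f ^ n).order = n * f.order := by
  induction n with
  | zero => simp [order_one]
  | succ n ih => rw [pow_succ, order_mul, ih, Nat.cast_succ, add_one_mul]

private lemma psOrder_sub_ge {f g : PowerSeries ℂ} {n : ℕ∞}
    (hf : n ≤ f.order) (hg : n ≤ g.order) : n ≤ (f - g).order := by
  refine le_order _ _ fun i hi => ?_
  simp [coeff_of_lt_order i (lt_of_lt_of_le hi hf),
    coeff_of_lt_order i (lt_of_lt_of_le hi hg)]

/-- **Monomials over the non-jumping Newton polyhedron satisfy the valuative
inequality.**  With arcs `φ k = a k • t ^ (v k) * (1 + ψ k)` and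
`φ' k = a' k • t ^ (v' k) * (1 + ψ' k)`, let `M` be the set of indices `i` for which
the order of `φ ^ (p i) − (φ') ^ (p i)` does not jump, i.e. equals
`min(⟨p i, v⟩, ⟨p i, v'⟩)`.  If `q ∈ ℕ^m` lies in the Newton polyhedron
`N(p i | i ∈ M)`, then `ord(φ ^ q − (φ') ^ q) ≥ min_i ord(φ ^ (p i) − (φ') ^ (p i))`. -/
theorem order_ge_of_mem_newtonPolyhedron_of_nonjumping
    {m n : ℕ} (v v' : Fin m → ℕ) (a a' : Fin m → ℂˣ)
    (ψ ψ' : Fin m → PowerSeries ℂ)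
    (hψ : ∀ k, PowerSeries.constantCoeff (ψ k) = 0)
    (hψ' : ∀ k, PowerSeries.constantCoeff (ψ' k) = 0)
    (φ φ' : Fin m → PowerSeries ℂ)
    (hφ : ∀ k, φ k = PowerSeries.C (a k : ℂ) * PowerSeries.X ^ v k * (1 + ψ k))
    (hφ' : ∀ k, φ' k = PowerSeries.C (a' k : ℂ) * PowerSeries.X ^ v' k * (1 + ψ' k))
    (p : Fin n → (Fin m → ℕ))
    (M : Set (Fin n))
    (hM : M = {i : Fin n |
        PowerSeries.order ((∏ k, φ k ^ p i k) - ∏ k, φ' k ^ p i k) =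
          (min (∑ k, p i k * v k) (∑ k, p i k * v' k) : ℕ∞)})
    (q : Fin m → ℕ)
    (hq : (fun k => (q k : ℝ)) ∈
        convexHull ℝ (⋃ i ∈ M, {x : Fin m → ℝ | ∀ k, (p i k : ℝ) ≤ x k})) :
    Finset.univ.inf (fun i : Fin n =>
        PowerSeries.order ((∏ k, φ k ^ p i k) - ∏ k, φ' k ^ p i k)) ≤
      PowerSeries.order ((∏ k, φ k ^ q k) - ∏ k, φ' k ^ q k) := by
  -- order of a monomial arc power product
  have horder : ∀ (w : Fin m → ℕ) (b : Fin m → ℂˣ) (χ : Fin m → PowerSeries ℂ),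
      (∀ k, PowerSeries.constantCoeff (χ k) = 0) →
      ∀ r : Fin m → ℕ,
      (∏ k, (PowerSeries.C (b k : ℂ) * PowerSeries.X ^ w k * (1 + χ k)) ^ r k).order
        = ((∑ k, r k * w k : ℕ) : ℕ∞) := by
    intro w b χ hχ r
    rw [psOrder_prod]
    have hone : ∀ k, ((PowerSeries.C (b k : ℂ) * PowerSeries.X ^ w k * (1 + χ k)) ^ r k).order
        = ((r k * w k : ℕ) : ℕ∞) := by
      intro k
      rw [psOrder_pow, order_mul, order_mul, order_X_pow,
        psOrder_eq_zero (f := PowerSeries.C (b k : ℂ)) (by simp),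
        psOrder_eq_zero (f := 1 + χ k) (by simp [hχ k])]
      push_cast
      ring
    simp_rw [hone]
    exact (Nat.cast_sum _ _).symm
  have key : ∀ r : Fin m → ℕ,
      ((min (∑ k, r k * v k) (∑ k, r k * v' k) : ℕ) : ℕ∞) ≤
        ((∏ k, φ k ^ r k) - ∏ k, φ' k ^ r k).order := by
    intro r
    refine psOrder_sub_ge ?_ ?_
    · simp_rw [hφ]
      rw [horder v a ψ hψ r]
      exact_mod_cast Nat.cast_le.mpr (min_le_left _ _)
    · simp_rw [hφ']
      rw [horder v' a' ψ' hψ' r]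
      exact_mod_cast Nat.cast_le.mpr (min_le_right _ _)
  -- M is nonempty
  have hMne : M.Nonempty := by
    by_contra h
    rw [Set.not_nonempty_iff_eq_empty] at h
    subst h
    simp [convexHull_empty] at hq
  -- convex hull gives the linear inequality for any weight
  have hconv : ∀ w : Fin m → ℕ, ∃ i ∈ M, ∑ k, p i k * w k ≤ ∑ k, q k * w k := by
    intro w
    classical
    set F := M.toFinite.toFinset with hFdef
    have hF : F.Nonempty := by
      rw [hFdef, Set.Finite.toFinset_nonempty]; exact hMne
    obtain ⟨i0, hi0, hc⟩ := F.exists_mem_eq_inf' hF (fun i => ∑ k, p i k * w k)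
    set c : ℕ := F.inf' hF (fun i => ∑ k, p i k * w k) with hcdef
    have hlin : IsLinearMap ℝ (fun x : Fin m → ℝ => ∑ k, x k * (w k : ℝ)) := by
      constructor
      · intro x y; simp [add_mul, Finset.sum_add_distrib]
      · intro cr x; simp [Finset.mul_sum, mul_assoc]
    have hsub : (⋃ i ∈ M, {x : Fin m → ℝ | ∀ k, (p i k : ℝ) ≤ x k}) ⊆
        {x : Fin m → ℝ | (c : ℝ) ≤ ∑ k, x k * (w k : ℝ)} := by
      rintro x hx
      simp only [Set.mem_iUnion, Set.mem_setOf_eq] at hx ⊢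
      obtain ⟨i, hiM, hxi⟩ := hx
      have h1 : c ≤ ∑ k, p i k * w k :=
        Finset.inf'_le _ (by rw [hFdef, Set.Finite.mem_toFinset]; exact hiM)
      have h2 : ((∑ k, p i k * w k : ℕ) : ℝ) ≤ ∑ k, x k * (w k : ℝ) := by
        push_cast
        exact Finset.sum_le_sum fun k _ =>
          mul_le_mul_of_nonneg_right (hxi k) (Nat.cast_nonneg _)
      exact le_trans (by exact_mod_cast h1) h2
    have hmem := convexHull_min hsub (convex_halfSpace_ge hlin ((c : ℝ))) hq
    simp only [Set.mem_setOf_eq] at hmem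
    refine ⟨i0, by rwa [hFdef, Set.Finite.mem_toFinset] at hi0, ?_⟩
    have : (c : ℝ) ≤ ((∑ k, q k * w k : ℕ) : ℝ) := by push_cast; exact hmem
    have hcle : c ≤ ∑ k, q k * w k := by exact_mod_cast this
    rw [← hc]
    exact hcle
  obtain ⟨i1, hi1, h1⟩ := hconv v
  obtain ⟨i2, hi2, h2⟩ := hconv v'
  have hval : ∀ i ∈ M,
      PowerSeries.order ((∏ k, φ k ^ p i k) - ∏ k, φ' k ^ p i k) =
        (min (∑ k, p i k * v k) (∑ k, p i k * v' k) : ℕ∞) := by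
    intro i hi; rw [hM] at hi; exact hi
  rcases le_total (∑ k, q k * v k) (∑ k, q k * v' k) with h | h
  · calc Finset.univ.inf (fun i : Fin n =>
        PowerSeries.order ((∏ k, φ k ^ p i k) - ∏ k, φ' k ^ p i k))
        ≤ PowerSeries.order ((∏ k, φ k ^ p i1 k) - ∏ k, φ' k ^ p i1 k) :=
          Finset.inf_le (Finset.mem_univ i1)
      _ = (min (∑ k, p i1 k * v k) (∑ k, p i1 k * v' k) : ℕ∞) := hval i1 hi1
      _ ≤ ((min (∑ k, q k * v k) (∑ k, q k * v' k) : ℕ) : ℕ∞) := by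
          exact_mod_cast Nat.cast_le.mpr
            (le_min ((min_le_left _ _).trans h1) (((min_le_left _ _).trans h1).trans h))
      _ ≤ _ := key q
  · calc Finset.univ.inf (fun i : Fin n =>
        PowerSeries.order ((∏ k, φ k ^ p i k) - ∏ k, φ' k ^ p i k))
        ≤ PowerSeries.order ((∏ k, φ k ^ p i2 k) - ∏ k, φ' k ^ p i2 k) :=
          Finset.inf_le (Finset.mem_univ i2)
      _ = (min (∑ k, p i2 k * v k) (∑ k, p i2 k * v' k) : ℕ∞) := hval i2 hi2
      _ ≤ ((min (∑ k, q k * v k) (∑ k, q k * v' k) : ℕ) : ℕ∞) := by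
          exact_mod_cast Nat.cast_le.mpr
            (le_min (((min_le_right _ _).trans h2).trans h) ((min_le_right _ _).trans h2))
      _ ≤ _ := key q
end

section
/- Stratification of order jumps along an arc: Let v, v' ∈ ℕ^m, a, a' ∈ (ℂ^*)^m, and ψ_k, ψ'_k ∈ ℂ⟦t⟧ with zero constant term; set φ_k = a_k t^{v_k}(1+ψ_k), φ'_k = a'_k t^{v'_k}(1+ψ'_k), and for q ∈ ℕ^m write ⟨q,ṽ⟩ := min(⟨q,v⟩, ⟨q,v'⟩). Then there exist l ∈ ℕ, a strictly decreasing chain of ℝ-linear subspaces ℝ^m = V_0 ⊋ V_1 ⊋ ⋯ ⊋ V_l of ℝ^m, and a strictly increasing sequence of positive integers δ_0 < δ_1 < ⋯ < δ_{l−1}, such that for every q ∈ ℕ^m with ord(φ^q − (φ')^q) > ⟨q,ṽ⟩ the following hold (regarding q as a point of ℝ^m): (i) for each k ∈ {0,…,l−1}, ord(φ^q − (φ')^q) ≥ ⟨q,ṽ⟩ + δ_k if and only if q ∈ V_k; (ii) for each k ∈ {0,…,l−1}, ord(φ^q − (φ')^q) = ⟨q,ṽ⟩ + δ_k if and only if q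 ∈ V_k and q ∉ V_{k+1}; and (iii) ord(φ^q − (φ')^q) = ∞ if and only if q ∈ V_l. -/
open PowerSeries Finset


namespace StratProof
noncomputable section

lemma order_ge_iff (f : PowerSeries ℂ) (d : ℕ) :
    (d : ℕ∞) ≤ f.order ↔ ∀ j < d, PowerSeries.coeff j f = 0 := by
  constructor
  · intro h j hj
    exact PowerSeries.coeff_of_lt_order j (lt_of_lt_of_le (by exact_mod_cast hj) h)
  · intro h
    exact PowerSeries.nat_le_order f d h

lemma order_neg (f : PowerSeries ℂ) : (-f).order = f.order := by
  have : (-f) = (-1 : PowerSeries ℂ) * f := by ring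
  rw [this, PowerSeries.order_mul,
    PowerSeries.order_zero_of_unit (isUnit_iff_constantCoeff.mpr (by simp)), zero_add]

lemma order_deriv_ge_iff (g : PowerSeries ℂ) (hg : PowerSeries.constantCoeff g = 0) (d : ℕ) :
    (d : ℕ∞) ≤ (d⁄dX ℂ g).order ↔ ((d + 1 : ℕ) : ℕ∞) ≤ g.order := by
  rw [order_ge_iff, order_ge_iff]
  constructor
  · intro h i hi
    rcases Nat.eq_zero_or_pos i with h0 | h0
    · subst h0; simpa using hg
    · obtain ⟨j, rfl⟩ := Nat.exists_eq_add_of_lt h0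
      simp only [zero_add] at *
      have := h j (by omega)
      rw [PowerSeries.coeff_derivative] at this
      have hne : ((j : ℂ) + 1) ≠ 0 := Nat.cast_add_one_ne_zero j
      rcases mul_eq_zero.mp this with h' | h'
      · exact h'
      · exact absurd h' hne
  · intro h j hj
    rw [PowerSeries.coeff_derivative, h (j+1) (by omega), zero_mul]

lemma order_W_ge_iff (U U' : PowerSeries ℂ) (hU' : constantCoeff U' ≠ 0)
    (hg : constantCoeff (U - U') = 0) (d : ℕ) :
    (d : ℕ∞) ≤ (d⁄dX ℂ U * U' - d⁄dX ℂ U' * U).order ↔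
      ((d + 1 : ℕ) : ℕ∞) ≤ (U - U').order := by
  have hW : d⁄dX ℂ U * U' - d⁄dX ℂ U' * U
      = d⁄dX ℂ (U - U') * U' - d⁄dX ℂ U' * (U - U') := by
    rw [map_sub]; ring
  have hordU' : U'.order = 0 :=
    order_zero_of_unit (isUnit_iff_constantCoeff.mpr (isUnit_iff_ne_zero.mpr hU'))
  rw [hW]
  constructor
  · intro h
    by_contra hcon
    have hfin : (U - U').order ≠ ⊤ := by
      intro htop
      exact hcon (htop ▸ le_top)
    obtain ⟨n, hn⟩ : ∃ n : ℕ, (U - U').order = (n : ℕ∞) := by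
      lift (U - U').order to ℕ using hfin with n hn
      exact ⟨n, rfl⟩
    have h1n : ((1 : ℕ) : ℕ∞) ≤ (U - U').order := by
      rw [order_ge_iff]
      intro j hj
      interval_cases j
      simpa using hg
    have hn1 : 1 ≤ n := by
      rw [hn] at h1n; exact_mod_cast h1n
    have hnd : n ≤ d := by
      rw [hn] at hcon
      by_contra hh
      exact hcon (by exact_mod_cast (by omega : d + 1 ≤ n))
    have hDg_ge : ((n - 1 : ℕ) : ℕ∞) ≤ (d⁄dX ℂ (U - U')).order := by
      rw [order_deriv_ge_iff _ hg, hn]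
      exact_mod_cast (by omega : n - 1 + 1 ≤ n)
    have hDg_lt : (d⁄dX ℂ (U - U')).order < (n : ℕ∞) := by
      by_contra hh
      push_neg at hh
      have := (order_deriv_ge_iff (U - U') hg n).mp hh
      rw [hn] at this
      have : (n + 1 : ℕ) ≤ n := by exact_mod_cast this
      omega
    have hDg : (d⁄dX ℂ (U - U')).order = ((n - 1 : ℕ) : ℕ∞) := by
      refine le_antisymm ?_ hDg_ge
      have hfin2 : (d⁄dX ℂ (U - U')).order ≠ ⊤ := fun htop => by
        rw [htop] at hDg_lt; exact not_top_lt hDg_lt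
      obtain ⟨s, hs⟩ : ∃ s : ℕ, (d⁄dX ℂ (U - U')).order = (s : ℕ∞) := by
        lift (d⁄dX ℂ (U - U')).order to ℕ using hfin2 with s hs
        exact ⟨s, rfl⟩
      rw [hs] at hDg_lt ⊢
      have : s < n := by exact_mod_cast hDg_lt
      exact_mod_cast (by omega : s ≤ n - 1)
    have hord1 : (d⁄dX ℂ (U - U') * U').order = ((n - 1 : ℕ) : ℕ∞) := by
      rw [order_mul, hordU', add_zero, hDg]
    have hord2 : (n : ℕ∞) ≤ (d⁄dX ℂ U' * (U - U')).order := by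
      refine le_trans ?_ (le_order_mul _ _)
      rw [hn]
      exact le_add_self
    have hne : (d⁄dX ℂ (U - U') * U').order ≠ (-(d⁄dX ℂ U' * (U - U'))).order := by
      rw [order_neg, hord1]
      intro heq
      rw [← heq] at hord2
      have : (n : ℕ) ≤ ((n - 1 : ℕ)) := by exact_mod_cast hord2
      omega
    have horder : (d⁄dX ℂ (U - U') * U' - d⁄dX ℂ U' * (U - U')).order
        = min (d⁄dX ℂ (U - U') * U').order (-(d⁄dX ℂ U' * (U - U'))).order := by
      rw [sub_eq_add_neg]
      exact order_add_of_order_ne _ _ hne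
    rw [horder, order_neg, hord1] at h
    have hmin : min ((n - 1 : ℕ) : ℕ∞) (d⁄dX ℂ U' * (U - U')).order = ((n - 1 : ℕ) : ℕ∞) := by
      refine min_eq_left ?_
      refine le_trans ?_ hord2
      exact_mod_cast (by omega : n - 1 ≤ n)
    rw [hmin] at h
    have : d ≤ n - 1 := by exact_mod_cast h
    omega
  · intro h
    have h1 : (d : ℕ∞) ≤ (d⁄dX ℂ (U - U') * U').order := by
      rw [order_mul, hordU', add_zero]
      exact (order_deriv_ge_iff _ hg d).mpr h
    have h2 : (d : ℕ∞) ≤ (d⁄dX ℂ U' * (U - U')).order := by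
      refine le_trans ?_ (le_order_mul _ _)
      refine le_trans ?_ le_add_self
      exact le_trans (by exact_mod_cast Nat.le_succ d) h
    have := min_order_le_order_add (d⁄dX ℂ (U - U') * U') (-(d⁄dX ℂ U' * (U - U')))
    rw [order_neg] at this
    rw [sub_eq_add_neg]
    exact le_trans (le_min h1 h2) this

lemma W_eq_zero_iff (U U' : PowerSeries ℂ) (hU' : constantCoeff U' ≠ 0)
    (hg : constantCoeff (U - U') = 0) :
    d⁄dX ℂ U * U' - d⁄dX ℂ U' * U = 0 ↔ U - U' = 0 := by
  constructor
  · intro h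
    rw [← PowerSeries.order_eq_top]
    by_contra hfin
    obtain ⟨n, hn⟩ : ∃ n : ℕ, (U - U').order = (n : ℕ∞) := by
      lift (U - U').order to ℕ using hfin with n hn
      exact ⟨n, rfl⟩
    have := (order_W_ge_iff U U' hU' hg (n + 1)).mp
      (by rw [h, PowerSeries.order_zero]; exact le_top)
    rw [hn] at this
    have : (n + 1 + 1 : ℕ) ≤ n := by exact_mod_cast this
    omega
  · intro h
    have hUU : U = U' := by linear_combination h
    rw [hUU]; ring

lemma logDeriv_mul (a b : PowerSeries ℂ) (ha : constantCoeff a ≠ 0)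
    (hb : constantCoeff b ≠ 0) :
    d⁄dX ℂ (a*b) * (a*b)⁻¹ = d⁄dX ℂ a * a⁻¹ + d⁄dX ℂ b * b⁻¹ := by
  have h1 : a * a⁻¹ = 1 := PowerSeries.mul_inv_cancel a ha
  have h2 : b * b⁻¹ = 1 := PowerSeries.mul_inv_cancel b hb
  calc d⁄dX ℂ (a*b) * (a*b)⁻¹ = (a*a⁻¹) * (d⁄dX ℂ b * b⁻¹) + (b*b⁻¹) * (d⁄dX ℂ a * a⁻¹) := by
        rw [Derivation.leibniz, PowerSeries.mul_inv_rev, smul_eq_mul, smul_eq_mul]; ring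
    _ = d⁄dX ℂ a * a⁻¹ + d⁄dX ℂ b * b⁻¹ := by rw [h1, h2]; ring

lemma logDeriv_pow (a : PowerSeries ℂ) (ha : constantCoeff a ≠ 0) (n : ℕ) :
    d⁄dX ℂ (a^n) * (a^n)⁻¹ = (n : PowerSeries ℂ) * (d⁄dX ℂ a * a⁻¹) := by
  induction n with
  | zero => simp
  | succ n ih =>
      have hpow : constantCoeff (a^n) ≠ 0 := by
        rw [map_pow]; exact pow_ne_zero n ha
      rw [pow_succ, logDeriv_mul _ _ hpow ha, ih]
      push_cast; ring

lemma logDeriv_prod' {ι : Type*} [DecidableEq ι] (s : Finset ι) (u : ι → PowerSeries ℂ)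
    (q : ι → ℕ) (hu : ∀ k, constantCoeff (u k) ≠ 0) :
    d⁄dX ℂ (∏ k ∈ s, u k ^ q k) * (∏ k ∈ s, u k ^ q k)⁻¹ =
      ∑ k ∈ s, (q k : PowerSeries ℂ) * (d⁄dX ℂ (u k) * (u k)⁻¹) := by
  induction s using Finset.induction with
  | empty => simp
  | @insert x s hx ih =>
      have h1 : constantCoeff (u x ^ q x) ≠ 0 := by
        rw [map_pow]; exact pow_ne_zero _ (hu x)
      have h2 : constantCoeff (∏ k ∈ s, u k ^ q k) ≠ 0 := by
        rw [map_prod]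
        exact Finset.prod_ne_zero_iff.mpr fun k _ => by rw [map_pow]; exact pow_ne_zero _ (hu k)
      rw [Finset.prod_insert hx, Finset.sum_insert hx, logDeriv_mul _ _ h1 h2,
        logDeriv_pow _ (hu x), ih]

lemma logDeriv_prod {m : ℕ} (u : Fin m → PowerSeries ℂ) (q : Fin m → ℕ)
    (hu : ∀ k, constantCoeff (u k) ≠ 0) :
    d⁄dX ℂ (∏ k, u k ^ q k) * (∏ k, u k ^ q k)⁻¹ =
      ∑ k, (q k : PowerSeries ℂ) * (d⁄dX ℂ (u k) * (u k)⁻¹) :=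
  logDeriv_prod' univ u q hu

lemma hW_eq {m : ℕ} (u u' : Fin m → PowerSeries ℂ)
    (hcu : ∀ k, constantCoeff (u k) = 1) (hcu' : ∀ k, constantCoeff (u' k) = 1)
    (q : Fin m → ℕ) :
    ((∏ k, u k ^ q k) * ∏ k, u' k ^ q k) *
        (∑ k, (q k : PowerSeries ℂ) *
          (d⁄dX ℂ (u k) * (u k)⁻¹ - d⁄dX ℂ (u' k) * (u' k)⁻¹)) =
      d⁄dX ℂ (∏ k, u k ^ q k) * (∏ k, u' k ^ q k) -
        d⁄dX ℂ (∏ k, u' k ^ q k) * (∏ k, u k ^ q k) := by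
  have hcu0 : ∀ k, constantCoeff (u k) ≠ 0 := fun k => by rw [hcu k]; exact one_ne_zero
  have hcu'0 : ∀ k, constantCoeff (u' k) ≠ 0 := fun k => by rw [hcu' k]; exact one_ne_zero
  have hcU : constantCoeff (∏ k, u k ^ q k) ≠ 0 := by
    rw [map_prod]
    exact Finset.prod_ne_zero_iff.mpr fun k _ => by rw [map_pow]; exact pow_ne_zero _ (hcu0 k)
  have hcU' : constantCoeff (∏ k, u' k ^ q k) ≠ 0 := by
    rw [map_prod]
    exact Finset.prod_ne_zero_iff.mpr fun k _ => by rw [map_pow]; exact pow_ne_zero _ (hcu'0 k)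
  have hUinv : (∏ k, u k ^ q k) * (∏ k, u k ^ q k)⁻¹ = 1 :=
    PowerSeries.mul_inv_cancel _ hcU
  have hU'inv : (∏ k, u' k ^ q k) * (∏ k, u' k ^ q k)⁻¹ = 1 :=
    PowerSeries.mul_inv_cancel _ hcU'
  have hsplit : (∑ k, (q k : PowerSeries ℂ) *
      (d⁄dX ℂ (u k) * (u k)⁻¹ - d⁄dX ℂ (u' k) * (u' k)⁻¹)) =
      (∑ k, (q k : PowerSeries ℂ) * (d⁄dX ℂ (u k) * (u k)⁻¹)) -
        ∑ k, (q k : PowerSeries ℂ) * (d⁄dX ℂ (u' k) * (u' k)⁻¹) := by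
    rw [← Finset.sum_sub_distrib]
    exact Finset.sum_congr rfl fun k _ => by ring
  rw [hsplit, ← logDeriv_prod u q hcu0, ← logDeriv_prod u' q hcu'0]
  calc ((∏ k, u k ^ q k) * ∏ k, u' k ^ q k) *
      (d⁄dX ℂ (∏ k, u k ^ q k) * (∏ k, u k ^ q k)⁻¹ -
        d⁄dX ℂ (∏ k, u' k ^ q k) * (∏ k, u' k ^ q k)⁻¹)
      = ((∏ k, u k ^ q k) * (∏ k, u k ^ q k)⁻¹) *
          (d⁄dX ℂ (∏ k, u k ^ q k) * (∏ k, u' k ^ q k)) -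
        ((∏ k, u' k ^ q k) * (∏ k, u' k ^ q k)⁻¹) *
          (d⁄dX ℂ (∏ k, u' k ^ q k) * (∏ k, u k ^ q k)) := by ring
    _ = _ := by rw [hUinv, hU'inv, one_mul, one_mul]

lemma coeff_F {m : ℕ} (u u' : Fin m → PowerSeries ℂ) (q : Fin m → ℕ) (j : ℕ) :
    coeff j (∑ k, (q k : PowerSeries ℂ) *
        (d⁄dX ℂ (u k) * (u k)⁻¹ - d⁄dX ℂ (u' k) * (u' k)⁻¹)) =
      ∑ k, (q k : ℂ) * coeff j (d⁄dX ℂ (u k) * (u k)⁻¹ - d⁄dX ℂ (u' k) * (u' k)⁻¹) := by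
  rw [map_sum]
  exact Finset.sum_congr rfl fun k _ => by
    rw [show ((q k : PowerSeries ℂ)) = C (q k : ℂ) from (map_natCast (C (R := ℂ)) (q k)).symm,
      coeff_C_mul]

lemma key_ge {m : ℕ} (u u' : Fin m → PowerSeries ℂ)
    (hcu : ∀ k, constantCoeff (u k) = 1) (hcu' : ∀ k, constantCoeff (u' k) = 1)
    (q : Fin m → ℕ) (d : ℕ) :
    ((d + 1 : ℕ) : ℕ∞) ≤ ((∏ k, u k ^ q k) - ∏ k, u' k ^ q k).order ↔
      ∀ j < d, (∑ k, (q k : ℂ) *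
        coeff j (d⁄dX ℂ (u k) * (u k)⁻¹ - d⁄dX ℂ (u' k) * (u' k)⁻¹)) = 0 := by
  have hcu0 : ∀ k, constantCoeff (u k) ≠ 0 := fun k => by rw [hcu k]; exact one_ne_zero
  have hcu'0 : ∀ k, constantCoeff (u' k) ≠ 0 := fun k => by rw [hcu' k]; exact one_ne_zero
  have hcU1 : constantCoeff (∏ k, u k ^ q k) = 1 := by
    rw [map_prod]
    rw [Finset.prod_eq_one fun k _ => by rw [map_pow, hcu k, one_pow]]
  have hcU1' : constantCoeff (∏ k, u' k ^ q k) = 1 := by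
    rw [map_prod]
    rw [Finset.prod_eq_one fun k _ => by rw [map_pow, hcu' k, one_pow]]
  have hg0 : constantCoeff ((∏ k, u k ^ q k) - ∏ k, u' k ^ q k) = 0 := by
    rw [map_sub, hcU1, hcU1', sub_self]
  rw [← order_W_ge_iff _ _ (by rw [hcU1']; exact one_ne_zero) hg0 d]
  rw [← hW_eq u u' hcu hcu' q]
  rw [PowerSeries.order_mul]
  have hordUU' : ((∏ k, u k ^ q k) * ∏ k, u' k ^ q k).order = 0 := by
    apply order_zero_of_unit
    apply isUnit_iff_constantCoeff.mpr
    rw [map_mul, hcU1, hcU1', one_mul]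
    exact isUnit_one
  rw [hordUU', zero_add, order_ge_iff]
  constructor
  · intro h j hj
    rw [← coeff_F u u' q j]
    exact h j hj
  · intro h j hj
    rw [coeff_F u u' q j]
    exact h j hj

lemma key_top {m : ℕ} (u u' : Fin m → PowerSeries ℂ)
    (hcu : ∀ k, constantCoeff (u k) = 1) (hcu' : ∀ k, constantCoeff (u' k) = 1)
    (q : Fin m → ℕ) :
    ((∏ k, u k ^ q k) - ∏ k, u' k ^ q k) = 0 ↔
      ∀ j, (∑ k, (q k : ℂ) *
        coeff j (d⁄dX ℂ (u k) * (u k)⁻¹ - d⁄dX ℂ (u' k) * (u' k)⁻¹)) = 0 := by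
  have hcu0 : ∀ k, constantCoeff (u k) ≠ 0 := fun k => by rw [hcu k]; exact one_ne_zero
  have hcu'0 : ∀ k, constantCoeff (u' k) ≠ 0 := fun k => by rw [hcu' k]; exact one_ne_zero
  have hcU1 : constantCoeff (∏ k, u k ^ q k) = 1 := by
    rw [map_prod]
    rw [Finset.prod_eq_one fun k _ => by rw [map_pow, hcu k, one_pow]]
  have hcU1' : constantCoeff (∏ k, u' k ^ q k) = 1 := by
    rw [map_prod]
    rw [Finset.prod_eq_one fun k _ => by rw [map_pow, hcu' k, one_pow]]
  have hg0 : constantCoeff ((∏ k, u k ^ q k) - ∏ k, u' k ^ q k) = 0 := by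
    rw [map_sub, hcU1, hcU1', sub_self]
  have hUU'ne : ((∏ k, u k ^ q k) * ∏ k, u' k ^ q k) ≠ 0 := by
    intro h0
    have h1 : constantCoeff ((∏ k, u k ^ q k) * ∏ k, u' k ^ q k) = 1 := by
      rw [map_mul, hcU1, hcU1', one_mul]
    rw [h0, map_zero] at h1
    exact one_ne_zero h1.symm
  rw [← W_eq_zero_iff _ _ (by rw [hcU1']; exact one_ne_zero) hg0]
  rw [← hW_eq u u' hcu hcu' q]
  rw [mul_eq_zero]
  constructor
  · intro h j
    rcases h with h | h
    · exact absurd h hUU'ne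
    · rw [← coeff_F u u' q j, h, map_zero]
  · intro h
    right
    ext j
    rw [coeff_F u u' q j, map_zero]
    exact h j

lemma coeff_CXU (A : ℂ) (N j : ℕ) (U : PowerSeries ℂ) :
    coeff (N + j) (C A * X ^ N * U) = A * coeff j U := by
  rw [mul_assoc, coeff_C_mul, add_comm, coeff_X_pow_mul]

lemma order_CXU (A : ℂ) (hA : A ≠ 0) (N : ℕ) (U : PowerSeries ℂ) :
    (C A * X ^ N * U).order = (N : ℕ∞) + U.order := by
  rw [order_mul, order_mul, order_X_pow,
    order_zero_of_unit (isUnit_iff_constantCoeff.mpr (by simpa using isUnit_iff_ne_zero.mpr hA)),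
    zero_add]

lemma prod_decomp {m : ℕ} (aa : Fin m → ℂ) (v : Fin m → ℕ) (u : Fin m → PowerSeries ℂ)
    (q : Fin m → ℕ) :
    ∏ k, (C (aa k) * X ^ v k * u k) ^ q k
      = C (∏ k, aa k ^ q k) * X ^ (∑ k, q k * v k) * ∏ k, u k ^ q k := by
  simp only [mul_pow, Finset.prod_mul_distrib, ← map_pow, ← map_prod, ← pow_mul]
  congr 1
  congr 1
  rw [← Finset.prod_pow_eq_pow_sum]
  exact Finset.prod_congr rfl fun k _ => by rw [mul_comm]

lemma min_cast_enat (a b : ℕ) : ((min a b : ℕ) : ℕ∞) = min (a : ℕ∞) (b : ℕ∞) := by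
  rcases le_total a b with h | h
  · rw [min_eq_left h, min_eq_left (by exact_mod_cast h : (a:ℕ∞) ≤ b)]
  · rw [min_eq_right h, min_eq_right (by exact_mod_cast h : (b:ℕ∞) ≤ a)]

lemma enat_eq_coe_iff (x : ℕ∞) (c : ℕ) :
    x = (c : ℕ∞) ↔ ((c : ℕ∞) ≤ x ∧ ¬ ((c + 1 : ℕ) : ℕ∞) ≤ x) := by
  constructor
  · rintro rfl
    refine ⟨le_refl _, fun h => ?_⟩
    have : c + 1 ≤ c := by exact_mod_cast h
    omega
  · rintro ⟨h1, h2⟩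
    have hne : x ≠ ⊤ := fun h => h2 (h ▸ le_top)
    lift x to ℕ using hne
    have h1' : c ≤ x := by exact_mod_cast h1
    have h2' : ¬ (c + 1 ≤ x) := fun hh => h2 (by exact_mod_cast hh)
    norm_cast
    omega

end
end StratProof

open StratProof

/-- **Stratification of order jumps along an arc.**
With arcs `φ k = a k • t ^ (v k) * (1 + ψ k)` and `φ' k = a' k • t ^ (v' k) * (1 + ψ' k)`,
there exist a strictly decreasing chain of linear subspaces
`ℝ^m = V 0 ⊋ V 1 ⊋ ⋯ ⊋ V l` and a strictly increasing sequence of positive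
integers `δ 0 < δ 1 < ⋯ < δ (l-1)` such that for every `q ∈ ℕ^m` whose order
jumps (i.e. `ord(φ^q − (φ')^q) > ⟨q, ṽ⟩ := min(⟨q,v⟩, ⟨q,v'⟩)`):
(i) `ord(φ^q − (φ')^q) ≥ ⟨q, ṽ⟩ + δ k` iff `q ∈ V k`, for `k < l`;
(ii) `ord(φ^q − (φ')^q) = ⟨q, ṽ⟩ + δ k` iff `q ∈ V k` and `q ∉ V (k+1)`, for `k < l`;
(iii) `ord(φ^q − (φ')^q) = ∞` iff `q ∈ V l`. -/
theorem stratification_of_order_jumps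
    {m : ℕ} (v v' : Fin m → ℕ) (a a' : Fin m → ℂˣ)
    (ψ ψ' : Fin m → PowerSeries ℂ)
    (hψ : ∀ k, PowerSeries.constantCoeff (ψ k) = 0)
    (hψ' : ∀ k, PowerSeries.constantCoeff (ψ' k) = 0)
    (φ φ' : Fin m → PowerSeries ℂ)
    (hφ : ∀ k, φ k = PowerSeries.C (a k : ℂ) * PowerSeries.X ^ v k * (1 + ψ k))
    (hφ' : ∀ k, φ' k = PowerSeries.C (a' k : ℂ) * PowerSeries.X ^ v' k * (1 + ψ' k)) :
    ∃ (l : ℕ) (V : ℕ → Submodule ℝ (Fin m → ℝ)) (δ : ℕ → ℕ),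
      V 0 = ⊤ ∧
      (∀ k < l, V (k + 1) < V k) ∧
      (∀ k < l, 0 < δ k) ∧
      (∀ k, k + 1 < l → δ k < δ (k + 1)) ∧
      ∀ q : Fin m → ℕ,
        ((min (∑ k, q k * v k) (∑ k, q k * v' k) : ℕ∞) <
            PowerSeries.order ((∏ k, φ k ^ q k) - ∏ k, φ' k ^ q k)) →
          ((∀ k < l,
              (((min (∑ j, q j * v j) (∑ j, q j * v' j) + δ k : ℕ) : ℕ∞) ≤
                  PowerSeries.order ((∏ j, φ j ^ q j) - ∏ j, φ' j ^ q j) ↔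
                (fun j => (q j : ℝ)) ∈ V k)) ∧
           (∀ k < l,
              (PowerSeries.order ((∏ j, φ j ^ q j) - ∏ j, φ' j ^ q j) =
                  ((min (∑ j, q j * v j) (∑ j, q j * v' j) + δ k : ℕ) : ℕ∞) ↔
                ((fun j => (q j : ℝ)) ∈ V k ∧ (fun j => (q j : ℝ)) ∉ V (k + 1)))) ∧
           (PowerSeries.order ((∏ j, φ j ^ q j) - ∏ j, φ' j ^ q j) = ⊤ ↔
              (fun j => (q j : ℝ)) ∈ V l)) := by
  classical
  set u : Fin m → PowerSeries ℂ := fun k => 1 + ψ k with hu_def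
  set u' : Fin m → PowerSeries ℂ := fun k => 1 + ψ' k with hu'_def
  have hu_k : ∀ k, (1 : PowerSeries ℂ) + ψ k = u k := fun k => by rw [hu_def]
  have hu'_k : ∀ k, (1 : PowerSeries ℂ) + ψ' k = u' k := fun k => by rw [hu'_def]
  have hcu1 : ∀ k, constantCoeff (u k) = 1 := fun k => by
    rw [← hu_k k, map_add, map_one, hψ k, add_zero]
  have hcu1' : ∀ k, constantCoeff (u' k) = 1 := fun k => by
    rw [← hu'_k k, map_add, map_one, hψ' k, add_zero]
  -- the linear forms
  set ℓ : ℕ → (Fin m → ℝ) →ₗ[ℝ] ℂ := fun j => ∑ k, LinearMap.smulRight (LinearMap.proj k)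
    (coeff j (d⁄dX ℂ (u k) * (u k)⁻¹ - d⁄dX ℂ (u' k) * (u' k)⁻¹)) with hℓ_def
  have hℓ : ∀ (j : ℕ) (x : Fin m → ℝ), ℓ j x =
      ∑ k, (x k : ℂ) * coeff j (d⁄dX ℂ (u k) * (u k)⁻¹ - d⁄dX ℂ (u' k) * (u' k)⁻¹) := by
    intro j x
    rw [hℓ_def]
    simp [LinearMap.sum_apply, LinearMap.smulRight_apply, LinearMap.proj_apply,
      Complex.real_smul]
  -- the subspaces
  set S : ℕ → Submodule ℝ (Fin m → ℝ) :=
    fun d => ⨅ j ∈ Finset.range d, LinearMap.ker (ℓ j) with hS_def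
  have hS_mem : ∀ (d : ℕ) (x : Fin m → ℝ), x ∈ S d ↔ ∀ j < d, ℓ j x = 0 := by
    intro d x
    rw [hS_def]
    simp [Submodule.mem_iInf, LinearMap.mem_ker, Finset.mem_range]
  have hS_anti : ∀ {d e : ℕ}, d ≤ e → S e ≤ S d := by
    intro d e hde x hx
    rw [hS_mem] at hx ⊢
    exact fun j hj => hx j (lt_of_lt_of_le hj hde)
  obtain ⟨T, hT⟩ : ∃ T : ℕ, ∀ e, T ≤ e → S T = S e := by
    obtain ⟨n, hn⟩ := IsArtinian.monotone_stabilizes (R := ℝ) (M := Fin m → ℝ)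
      ⟨fun d => OrderDual.toDual (S d), fun i j hij => hS_anti hij⟩
    exact ⟨n, fun e he => congrArg OrderDual.ofDual (hn e he)⟩
  set J : Finset ℕ := (Finset.range T).filter (fun d => S (d+1) < S d) with hJ_def
  have hJ_mem : ∀ d : ℕ, d ∈ J ↔ S (d+1) < S d := by
    intro d
    constructor
    · intro hd; exact (Finset.mem_filter.mp hd).2
    · intro hd
      refine Finset.mem_filter.mpr ⟨Finset.mem_range.mpr ?_, hd⟩
      by_contra hge
      push_neg at hge
      have h1 := hT d hge
      have h2 := hT (d+1) (le_trans hge (Nat.le_succ d))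
      rw [← h1, ← h2] at hd
      exact lt_irrefl _ hd
  have hstep : ∀ d : ℕ, d ∉ J → S d = S (d+1) := by
    intro d hd
    rcases lt_or_eq_of_le (hS_anti (Nat.le_succ d)) with h | h
    · exact absurd ((hJ_mem d).mpr h) hd
    · exact h.symm
  have hconst : ∀ x y : ℕ, x ≤ y → (∀ d, x ≤ d → d < y → d ∉ J) → S x = S y := by
    intro x y hxy hnj
    induction y, hxy using Nat.le_induction with
    | base => rfl
    | succ n hn ih =>
        rw [ih (fun d hd hdn => hnj d hd (by omega))]
        exact hstep n (hnj n hn (by omega))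
  have hJd : ∀ d ∈ J, ∃ i : Fin J.card, ((J.orderIsoOfFin rfl i : ℕ)) = d :=
    fun d hd => ⟨(J.orderIsoOfFin rfl).symm ⟨d, hd⟩, by simp⟩
  set jj : ℕ → ℕ :=
    fun k => if h : k < J.card then ((J.orderIsoOfFin rfl) ⟨k, h⟩ : ℕ) else T with hjj_def
  have hjj_pos : ∀ (k : ℕ) (h : k < J.card),
      jj k = ((J.orderIsoOfFin rfl) ⟨k, h⟩ : ℕ) := fun k h => by
    rw [hjj_def]; exact dif_pos h
  have hjj_top : ∀ k : ℕ, ¬ (k < J.card) → jj k = T := fun k h => by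
    rw [hjj_def]; exact dif_neg h
  have hjj_mem : ∀ (k : ℕ) (h : k < J.card), jj k ∈ J := fun k h => by
    rw [hjj_pos k h]; exact ((J.orderIsoOfFin rfl) ⟨k, h⟩).2
  have hjj_T : ∀ k, k < J.card → jj k < T := fun k h => by
    have hmem := hjj_mem k h
    rw [hJ_def] at hmem
    exact Finset.mem_range.mp (Finset.mem_filter.mp hmem).1
  have hjj_mono : ∀ k k' : ℕ, k < k' → ∀ h' : k' < J.card, jj k < jj k' := by
    intro k k' hkk h'
    rw [hjj_pos k (lt_trans hkk h'), hjj_pos k' h']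
    exact Subtype.coe_lt_coe.mpr
      ((J.orderIsoOfFin rfl).strictMono (show (⟨k, lt_trans hkk h'⟩ : Fin J.card) < ⟨k', h'⟩ from hkk))
  have hnext : ∀ k : ℕ, k + 1 ≤ J.card → S (jj k + 1) = S (jj (k+1)) := by
    intro k hk1
    have hk : k < J.card := by omega
    rcases Nat.lt_or_ge (k+1) J.card with hlt | hge
    · refine hconst _ _ ?_ ?_
      · have := hjj_mono k (k+1) (by omega) hlt
        omega
      · intro d hd1 hd2 hdJ
        obtain ⟨i, hi⟩ := hJd d hdJ
        have hik : ¬ ((i : ℕ) ≤ k) := by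
          intro hle
          have hle2 : ((J.orderIsoOfFin rfl) i : ℕ) ≤ ((J.orderIsoOfFin rfl) ⟨k, hk⟩ : ℕ) :=
            Subtype.coe_le_coe.mpr
              ((J.orderIsoOfFin rfl).monotone (show i ≤ (⟨k, hk⟩ : Fin J.card) from hle))
          rw [hi, ← hjj_pos k hk] at hle2
          omega
        have hge2 : ((J.orderIsoOfFin rfl) ⟨k+1, hlt⟩ : ℕ) ≤ ((J.orderIsoOfFin rfl) i : ℕ) :=
          Subtype.coe_le_coe.mpr
            ((J.orderIsoOfFin rfl).monotone
              (show (⟨k+1, hlt⟩ : Fin J.card) ≤ i from by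
                have := i.isLt
                exact (by omega : k + 1 ≤ (i : ℕ))))
        rw [hi, ← hjj_pos (k+1) hlt] at hge2
        omega
    · rw [hjj_top (k+1) (by omega)]
      refine hconst _ _ ?_ ?_
      · have := hjj_T k hk
        omega
      · intro d hd1 hd2 hdJ
        obtain ⟨i, hi⟩ := hJd d hdJ
        have hle2 : ((J.orderIsoOfFin rfl) i : ℕ) ≤ ((J.orderIsoOfFin rfl) ⟨k, hk⟩ : ℕ) :=
          Subtype.coe_le_coe.mpr
            ((J.orderIsoOfFin rfl).monotone (show i ≤ (⟨k, hk⟩ : Fin J.card) from by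
              have := i.isLt
              exact (by omega : (i : ℕ) ≤ k)))
        rw [hi, ← hjj_pos k hk] at hle2
        omega
  have hS0 : S 0 = ⊤ := by
    rw [eq_top_iff]
    intro x _
    rw [hS_mem]
    intro j hj
    exact absurd hj (Nat.not_lt_zero j)
  have hV0 : S (jj 0) = ⊤ := by
    rw [← hS0]
    refine (hconst 0 (jj 0) (Nat.zero_le _) ?_).symm
    intro d _ hdj hdJ
    obtain ⟨i, hi⟩ := hJd d hdJ
    rcases Nat.lt_or_ge 0 J.card with hpos | h0
    · have hle2 : ((J.orderIsoOfFin rfl) ⟨0, hpos⟩ : ℕ) ≤ ((J.orderIsoOfFin rfl) i : ℕ) :=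
        Subtype.coe_le_coe.mpr
          ((J.orderIsoOfFin rfl).monotone (show (⟨0, hpos⟩ : Fin J.card) ≤ i from by
            exact (by omega : (0 : ℕ) ≤ (i : ℕ))))
      rw [hi, ← hjj_pos 0 hpos] at hle2
      omega
    · have := i.isLt
      omega
  have h_allT : ∀ x : Fin m → ℝ, (∀ d, x ∈ S d) ↔ x ∈ S T := by
    intro x
    constructor
    · intro h; exact h T
    · intro h d
      rcases le_or_gt d T with hle | hlt
      · exact hS_anti hle h
      · rw [← hT d (by omega)]; exact h
  refine ⟨J.card, fun k => S (jj k), fun k => jj k + 1, hV0, ?_, ?_, ?_, ?_⟩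
  · -- strictly decreasing
    intro k hk
    show S (jj (k+1)) < S (jj k)
    rw [← hnext k (by omega)]
    exact (hJ_mem (jj k)).mp (hjj_mem k hk)
  · intro k _
    show 0 < jj k + 1
    omega
  · intro k hk
    show jj k + 1 < jj (k+1) + 1
    have := hjj_mono k (k+1) (by omega) hk
    omega
  · -- main part
    intro q hq
    have hq2 : ((min (∑ k, q k * v k) (∑ k, q k * v' k) : ℕ) : ℕ∞) <
        ((∏ k, φ k ^ q k) - ∏ k, φ' k ^ q k).order := by
      rw [min_cast_enat]
      push_cast
      exact hq
    have hP : (∏ k, φ k ^ q k)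
        = C (∏ k, (a k : ℂ) ^ q k) * X ^ (∑ k, q k * v k) * ∏ k, u k ^ q k := by
      calc (∏ k, φ k ^ q k) = ∏ k, (C (a k : ℂ) * X ^ v k * u k) ^ q k :=
            Finset.prod_congr rfl fun k _ => by rw [hφ k, hu_k k]
        _ = _ := prod_decomp _ _ _ _
    have hP' : (∏ k, φ' k ^ q k)
        = C (∏ k, (a' k : ℂ) ^ q k) * X ^ (∑ k, q k * v' k) * ∏ k, u' k ^ q k := by
      calc (∏ k, φ' k ^ q k) = ∏ k, (C (a' k : ℂ) * X ^ v' k * u' k) ^ q k :=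
            Finset.prod_congr rfl fun k _ => by rw [hφ' k, hu'_k k]
        _ = _ := prod_decomp _ _ _ _
    have hA0 : (∏ k, (a k : ℂ) ^ q k) ≠ 0 :=
      Finset.prod_ne_zero_iff.mpr fun k _ => pow_ne_zero _ (Units.ne_zero (a k))
    have hA0' : (∏ k, (a' k : ℂ) ^ q k) ≠ 0 :=
      Finset.prod_ne_zero_iff.mpr fun k _ => pow_ne_zero _ (Units.ne_zero (a' k))
    have hcU1 : constantCoeff (∏ k, u k ^ q k) = 1 := by
      rw [map_prod]
      rw [Finset.prod_eq_one fun k _ => by rw [map_pow, hcu1 k, one_pow]]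
    have hcU1' : constantCoeff (∏ k, u' k ^ q k) = 1 := by
      rw [map_prod]
      rw [Finset.prod_eq_one fun k _ => by rw [map_pow, hcu1' k, one_pow]]
    have hordU : (∏ k, u k ^ q k).order = 0 :=
      order_zero_of_unit (isUnit_iff_constantCoeff.mpr (by rw [hcU1]; exact isUnit_one))
    have hordU' : (∏ k, u' k ^ q k).order = 0 :=
      order_zero_of_unit (isUnit_iff_constantCoeff.mpr (by rw [hcU1']; exact isUnit_one))
    have horder1 : (∏ k, φ k ^ q k).order = ((∑ k, q k * v k : ℕ) : ℕ∞) := by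
      rw [hP, order_CXU _ hA0, hordU, add_zero]
    have horder2 : (∏ k, φ' k ^ q k).order = ((∑ k, q k * v' k : ℕ) : ℕ∞) := by
      rw [hP', order_CXU _ hA0', hordU', add_zero]
    have hNN : (∑ k, q k * v k) = ∑ k, q k * v' k := by
      by_contra hne
      have hneord : (∏ k, φ k ^ q k).order ≠ (-(∏ k, φ' k ^ q k)).order := by
        rw [order_neg, horder1, horder2]
        intro h
        exact hne (by exact_mod_cast h)
      have heq := order_add_of_order_ne _ _ hneord
      rw [← sub_eq_add_neg] at heq
      rw [heq, order_neg, horder1, horder2, ← min_cast_enat] at hq2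
      exact lt_irrefl _ hq2
    have hminN : min (∑ k, q k * v k) (∑ k, q k * v' k) = ∑ k, q k * v k := by
      rw [← hNN, min_self]
    rw [hminN] at hq2
    have hAA : (∏ k, (a k : ℂ) ^ q k) = ∏ k, (a' k : ℂ) ^ q k := by
      have hc0 : coeff (∑ k, q k * v k) ((∏ k, φ k ^ q k) - ∏ k, φ' k ^ q k) = 0 :=
        PowerSeries.coeff_of_lt_order _ hq2
      rw [map_sub, hP, hP', ← hNN] at hc0
      have e1 := coeff_CXU (∏ k, (a k : ℂ) ^ q k) (∑ k, q k * v k) 0 (∏ k, u k ^ q k)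
      have e2 := coeff_CXU (∏ k, (a' k : ℂ) ^ q k) (∑ k, q k * v k) 0 (∏ k, u' k ^ q k)
      rw [Nat.add_zero] at e1 e2
      rw [e1, e2] at hc0
      rw [coeff_zero_eq_constantCoeff] at hc0
      rw [hcU1, hcU1', mul_one, mul_one] at hc0
      exact sub_eq_zero.mp hc0
    have hdiff : (∏ k, φ k ^ q k) - ∏ k, φ' k ^ q k
        = C (∏ k, (a k : ℂ) ^ q k) * X ^ (∑ k, q k * v k) *
          ((∏ k, u k ^ q k) - ∏ k, u' k ^ q k) := by
      rw [hP, hP', ← hNN, ← hAA, mul_sub]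
    have horderD : ((∏ k, φ k ^ q k) - ∏ k, φ' k ^ q k).order
        = ((∑ k, q k * v k : ℕ) : ℕ∞) + ((∏ k, u k ^ q k) - ∏ k, u' k ^ q k).order := by
      rw [hdiff, order_CXU _ hA0]
    have hℓq : ∀ j : ℕ, ℓ j (fun i => (q i : ℝ)) =
        ∑ k, (q k : ℂ) * coeff j (d⁄dX ℂ (u k) * (u k)⁻¹ - d⁄dX ℂ (u' k) * (u' k)⁻¹) := by
      intro j
      rw [hℓ]
      exact Finset.sum_congr rfl fun k _ => by norm_cast
    have keyGE : ∀ d : ℕ,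
        (((∑ k, q k * v k) + (d + 1) : ℕ) : ℕ∞) ≤
            ((∏ k, φ k ^ q k) - ∏ k, φ' k ^ q k).order ↔
          (fun j => (q j : ℝ)) ∈ S d := by
      intro d
      rw [horderD]
      rw [show (((∑ k, q k * v k) + (d + 1) : ℕ) : ℕ∞)
            = ((∑ k, q k * v k : ℕ) : ℕ∞) + ((d + 1 : ℕ) : ℕ∞) by push_cast; ring]
      rw [ENat.add_le_add_iff_left
        (show ((∑ k, q k * v k : ℕ) : ℕ∞) ≠ ⊤ from ENat.coe_ne_top _)]
      rw [key_ge u u' hcu1 hcu1' q d]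
      rw [hS_mem]
      constructor
      · intro h j hj
        rw [hℓq j]
        exact h j hj
      · intro h j hj
        have := h j hj
        rw [hℓq j] at this
        exact this
    have keyTOP : ((∏ k, φ k ^ q k) - ∏ k, φ' k ^ q k).order = ⊤ ↔
        (fun j => (q j : ℝ)) ∈ S T := by
      rw [horderD]
      rw [ENat.add_eq_top]
      have h1 : ¬ ((∑ k, q k * v k : ℕ) : ℕ∞) = ⊤ := ENat.coe_ne_top _
      rw [or_iff_right h1]
      rw [PowerSeries.order_eq_top]
      rw [key_top u u' hcu1 hcu1' q]
      constructor
      · intro h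
        rw [← h_allT]
        intro d
        rw [hS_mem]
        intro j _
        rw [hℓq j]
        exact h j
      · intro h j
        have hall := (h_allT _).mpr h
        have := (hS_mem (j+1) _).mp (hall (j+1)) j (by omega)
        rw [hℓq j] at this
        exact this
    refine ⟨?_, ?_, ?_⟩
    · intro k hk
      show (((min (∑ j, q j * v j) (∑ j, q j * v' j)) + (jj k + 1) : ℕ) : ℕ∞) ≤
          ((∏ j, φ j ^ q j) - ∏ j, φ' j ^ q j).order ↔ (fun j => (q j : ℝ)) ∈ S (jj k)
      rw [hminN]
      exact keyGE (jj k)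
    · intro k hk
      show ((∏ j, φ j ^ q j) - ∏ j, φ' j ^ q j).order =
          (((min (∑ j, q j * v j) (∑ j, q j * v' j)) + (jj k + 1) : ℕ) : ℕ∞) ↔
        ((fun j => (q j : ℝ)) ∈ S (jj k) ∧ (fun j => (q j : ℝ)) ∉ S (jj (k + 1)))
      rw [hminN]
      have hiff : (((∑ k, q k * v k) + (jj k + 1) + 1 : ℕ) : ℕ∞) ≤
          ((∏ k, φ k ^ q k) - ∏ k, φ' k ^ q k).order ↔
            (fun j => (q j : ℝ)) ∈ S (jj (k+1)) := by
        rw [show ((∑ k, q k * v k) + (jj k + 1) + 1 : ℕ)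
              = (∑ k, q k * v k) + (jj k + 1 + 1) from by omega]
        rw [keyGE (jj k + 1)]
        rw [hnext k (by omega)]
      rw [enat_eq_coe_iff, keyGE (jj k), hiff]
    · show ((∏ j, φ j ^ q j) - ∏ j, φ' j ^ q j).order = ⊤ ↔
          (fun j => (q j : ℝ)) ∈ S (jj J.card)
      rw [hjj_top J.card (lt_irrefl _)]
      exact keyTOP
end

section
/- Campillo's criterion implies the saturation condition (combinatorial corollary of the main theorem): Let p_1,…,p_n ∈ ℕ^d and let Γ ⊆ ℕ^d be the additive submonoid they generate. Let m, k_1,…,k_r, l_1,…,l_s ∈ Γ be such that m − k_a ∈ ℕ^d for all a, m − l_b ∈ ℕ^d for all b, and Σ_a k_a − Σ_b l_b ∈ ℕ^d. Set w := m + Σ_a k_a − Σ_b l_b ∈ ℕ^d. Then for every subset K ⊆ {1,…,n} such that w ∉ N(p_i | i ∈ K), the vector w belongs to the subgroup of ℤ^d generated by {p_i | i ∉ K}. (By the main theorem, this means w lies in the semigroup Γ^s of the Lipschitz saturation.) -/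
open Finset

/-- **Campillo's criterion implies the saturation condition.**
Let `Γ ⊆ ℕ^d` be the submonoid generated by `p 1, …, p n`.  Let
`m, k 1, …, k r, l 1, …, l s ∈ Γ` with `m − k a ∈ ℕ^d`, `m − l b ∈ ℕ^d` and
`∑ a, k a − ∑ b, l b ∈ ℕ^d`.  Then `w := m + ∑ a, k a − ∑ b, l b` satisfies: for every
`K ⊆ {1,…,n}` with `w ∉ N(p i | i ∈ K)`, `w` lies in the subgroup of `ℤ^d`
generated by `{p i | i ∉ K}`. -/
theorem campillo_criterion_implies_saturation_condition
    {d n r s : ℕ} (p : Fin n → (Fin d → ℕ))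
    (Γ : AddSubmonoid (Fin d → ℕ)) (hΓ : Γ = AddSubmonoid.closure (Set.range p))
    (m : Fin d → ℕ) (k : Fin r → (Fin d → ℕ)) (l : Fin s → (Fin d → ℕ))
    (hm : m ∈ Γ) (hk : ∀ a, k a ∈ Γ) (hl : ∀ b, l b ∈ Γ)
    (hmk : ∀ a, ∀ j, k a j ≤ m j)
    (hml : ∀ b, ∀ j, l b j ≤ m j)
    (hsum : ∀ j, (∑ b, l b j) ≤ ∑ a, k a j)
    (w : Fin d → ℤ)
    (hw : ∀ j, w j = (m j : ℤ) + (∑ a, (k a j : ℤ)) - ∑ b, (l b j : ℤ)) :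
    ∀ K : Finset (Fin n),
      (fun j => (w j : ℝ)) ∉
          convexHull ℝ (⋃ i ∈ K, {x : Fin d → ℝ | ∀ j, (p i j : ℝ) ≤ x j}) →
      w ∈ AddSubgroup.closure {x : Fin d → ℤ | ∃ i ∉ K, x = fun j => (p i j : ℤ)} := by
  intro K hKhull
  subst hΓ
  set S : Set (Fin d → ℤ) := {x : Fin d → ℤ | ∃ i ∉ K, x = fun j => (p i j : ℤ)} with hS
  -- no generator indexed by K lies below w
  have hPK : ∀ i ∈ K, ¬ (∀ j, (p i j : ℤ) ≤ w j) := by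
    intro i hi hle
    apply hKhull
    apply subset_convexHull
    refine Set.mem_biUnion hi ?_
    intro j
    show (p i j : ℝ) ≤ (w j : ℝ)
    exact_mod_cast hle j
  -- key lemma
  have key : ∀ x ∈ AddSubmonoid.closure (Set.range p),
      (∀ j, (x j : ℤ) ≤ w j) → (fun j => (x j : ℤ)) ∈ AddSubgroup.closure S := by
    intro x hx
    induction hx using AddSubmonoid.closure_induction with
    | mem y hy =>
      intro hyw
      obtain ⟨i, rfl⟩ := hy
      by_cases hiK : i ∈ K
      · exact absurd hyw (hPK i hiK)
      · exact AddSubgroup.subset_closure ⟨i, hiK, rfl⟩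
    | zero =>
      intro _
      have : (fun j => ((0 : Fin d → ℕ) j : ℤ)) = (0 : Fin d → ℤ) := by
        funext j; simp
      rw [this]
      exact AddSubgroup.zero_mem _
    | add y z hy hz ihy ihz =>
      intro hyzw
      have hyw : ∀ j, (y j : ℤ) ≤ w j := by
        intro j
        have := hyzw j
        have h2 : (y j : ℤ) ≤ ((y + z) j : ℤ) := by
          simp only [Pi.add_apply]; push_cast; omega
        omega
      have hzw : ∀ j, (z j : ℤ) ≤ w j := by
        intro j
        have := hyzw j
        have h2 : (z j : ℤ) ≤ ((y + z) j : ℤ) := by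
          simp only [Pi.add_apply]; push_cast; omega
        omega
      have : (fun j => ((y + z) j : ℤ)) =
          (fun j => (y j : ℤ)) + (fun j => (z j : ℤ)) := by
        funext j; simp only [Pi.add_apply]; push_cast; ring
      rw [this]
      exact AddSubgroup.add_mem _ (ihy hyw) (ihz hzw)
  -- m, k a, l b are all ≤ w
  have hmw : ∀ j, (m j : ℤ) ≤ w j := by
    intro j
    rw [hw j]
    have h1 : (∑ b, (l b j : ℤ)) ≤ ∑ a, (k a j : ℤ) := by
      exact_mod_cast hsum j
    omega
  have hkw : ∀ a, ∀ j, (k a j : ℤ) ≤ w j := fun a j =>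
    le_trans (by exact_mod_cast hmk a j) (hmw j)
  have hlw : ∀ b, ∀ j, (l b j : ℤ) ≤ w j := fun b j =>
    le_trans (by exact_mod_cast hml b j) (hmw j)
  have hmZ := key m hm hmw
  have hkZ : ∀ a, (fun j => (k a j : ℤ)) ∈ AddSubgroup.closure S :=
    fun a => key (k a) (hk a) (hkw a)
  have hlZ : ∀ b, (fun j => (l b j : ℤ)) ∈ AddSubgroup.closure S :=
    fun b => key (l b) (hl b) (hlw b)
  have hweq : w = (fun j => (m j : ℤ)) + (∑ a, fun j => (k a j : ℤ))
      - ∑ b, fun j => (l b j : ℤ) := by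
    funext j
    simp only [Pi.sub_apply, Pi.add_apply, Finset.sum_apply]
    rw [hw j]
  rw [hweq]
  exact AddSubgroup.sub_mem _
    (AddSubgroup.add_mem _ hmZ (AddSubgroup.sum_mem _ fun a _ => hkZ a))
    (AddSubgroup.sum_mem _ fun b _ => hlZ b)
end

section
/- Elements of m + Γ_m satisfy the saturation condition: Let p_1,…,p_n ∈ ℕ^d and let Γ ⊆ ℕ^d be the additive submonoid they generate. Let m ∈ Γ and define Γ_m := Z ∩ ℝ_{≥0}^d, where Z ⊆ ℤ^d is the subgroup generated by the set {γ ∈ Γ : m − γ ∈ ℝ_{≥0}^d}. Then for every γ ∈ Γ_m, the vector m + γ ∈ ℕ^d satisfies: for every subset K ⊆ {1,…,n} such that m + γ ∉ N(p_i | i ∈ K), the vector m + γ belongs to the subgroup of ℤ^d generated by {p_i | i ∉ K}. (By the main theorem, this means m + Γ_m is contained in the semigroup Γ^s of the Lipschitz saturation.) -/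
open Finset

/-- **Elements of `m + Γ_m` satisfy the saturation condition.**
Let `Γ ⊆ ℕ^d` be the submonoid generated by `p 1, …, p n`, let `m ∈ Γ`, let
`Z ⊆ ℤ^d` be the subgroup generated by `{γ ∈ Γ : m − γ ∈ ℝ_{≥0}^d}`, and let
`Γ_m := Z ∩ ℝ_{≥0}^d`.  Then for every `γ ∈ Γ_m`, the vector `m + γ` satisfies:
for every `K ⊆ {1,…,n}` with `m + γ ∉ N(p i | i ∈ K)`, the vector `m + γ` lies in
the subgroup of `ℤ^d` generated by `{p i | i ∉ K}`. -/
theorem mem_m_add_gamma_m_saturation_condition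
    {d n : ℕ} (p : Fin n → (Fin d → ℕ))
    (Γ : AddSubmonoid (Fin d → ℕ)) (hΓ : Γ = AddSubmonoid.closure (Set.range p))
    (m : Fin d → ℕ) (hm : m ∈ Γ)
    (Z : AddSubgroup (Fin d → ℤ))
    (hZ : Z = AddSubgroup.closure
        {x : Fin d → ℤ | ∃ γ ∈ Γ, (∀ j, γ j ≤ m j) ∧ x = fun j => (γ j : ℤ)})
    (γ : Fin d → ℤ) (hγZ : γ ∈ Z) (hγpos : ∀ j, 0 ≤ γ j) :
    ∀ K : Finset (Fin n),
      (fun j => ((m j : ℝ) + (γ j : ℝ))) ∉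
          convexHull ℝ (⋃ i ∈ K, {x : Fin d → ℝ | ∀ j, (p i j : ℝ) ≤ x j}) →
      (fun j => (m j : ℤ) + γ j) ∈
        AddSubgroup.closure {x : Fin d → ℤ | ∃ i ∉ K, x = fun j => (p i j : ℤ)} := by
  intro K hK
  set G' : AddSubgroup (Fin d → ℤ) :=
    AddSubgroup.closure {x : Fin d → ℤ | ∃ i ∉ K, x = fun j => (p i j : ℤ)} with hG'
  -- Key lemma: every element of Γ dominated by m + γ lies in G'.
  have key : ∀ x : Fin d → ℕ, x ∈ Γ → (∀ j, (x j : ℤ) ≤ (m j : ℤ) + γ j) →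
      (fun j => (x j : ℤ)) ∈ G' := by
    intro x hx
    rw [hΓ] at hx
    induction hx using AddSubmonoid.closure_induction with
    | mem y hy =>
      intro hle
      obtain ⟨i, rfl⟩ := hy
      by_cases hiK : i ∈ K
      · exfalso
        apply hK
        apply subset_convexHull
        refine Set.mem_biUnion hiK ?_
        intro j
        have := hle j
        push_cast
        exact_mod_cast this
      · exact AddSubgroup.subset_closure ⟨i, hiK, rfl⟩
    | zero =>
      intro _
      have : (fun j => (((0 : Fin d → ℕ) j : ℤ))) = (0 : Fin d → ℤ) := by
        funext j; simp
      rw [this]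
      exact zero_mem _
    | add a b ha hb iha ihb =>
      intro hle
      have hlea : ∀ j, (a j : ℤ) ≤ (m j : ℤ) + γ j := by
        intro j
        refine le_trans ?_ (hle j)
        have : a j ≤ a j + b j := Nat.le_add_right _ _
        exact_mod_cast this
      have hleb : ∀ j, (b j : ℤ) ≤ (m j : ℤ) + γ j := by
        intro j
        refine le_trans ?_ (hle j)
        have : b j ≤ a j + b j := Nat.le_add_left _ _
        exact_mod_cast this
      have : (fun j => (((a + b) j : ℤ))) =
          (fun j => ((a j : ℤ))) + (fun j => ((b j : ℤ))) := by
        funext j; push_cast [Pi.add_apply]; ring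
      rw [this]
      exact add_mem (iha hlea) (ihb hleb)
  -- m itself is dominated by m + γ
  have hmG : (fun j => ((m j : ℤ))) ∈ G' := by
    refine key m hm ?_
    intro j
    simpa using hγpos j
  -- γ lies in G'
  have hγG : γ ∈ G' := by
    rw [hZ] at hγZ
    refine (AddSubgroup.closure_le G').mpr ?_ hγZ
    rintro x ⟨γ', hγ'Γ, hγ'le, rfl⟩
    refine key γ' hγ'Γ ?_
    intro j
    have h1 : (γ' j : ℤ) ≤ (m j : ℤ) := by exact_mod_cast hγ'le j
    linarith [hγpos j]
  have : (fun j => (m j : ℤ) + γ j) = (fun j => ((m j : ℤ))) + γ := by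
    funext j; simp
  rw [this]
  exact add_mem hmG hγG
end

section
/- Finite generating set for the saturated semigroup: Let p_1,…,p_n ∈ ℕ^d and let Γ ⊆ ℕ^d be the additive submonoid they generate. Assume that for each coordinate i ∈ {1,…,d} there is a nonzero element of Γ supported on the i-th coordinate axis, and let b_i be the minimal i-th coordinate of such an element; let c_i := max_{1≤j≤n} (p_j)_i, and let B := { γ ∈ ℕ^d : γ_i < b_i + c_i for all i }. Let S := { γ ∈ ℕ^d : for every K ⊆ {1,…,n} with γ ∉ N(p_i | i ∈ K), γ lies in the subgroup of ℤ^d generated by {p_i | i ∉ K} }. Then every element of S is a finite sum of elements of S ∩ B; i.e., S is contained in the additive submonoid of ℕ^d generated by the finite set S ∩ B. (By the main theorem, S is the semigroup Γ^s of the Lipschitz saturation, so S ∩ B is a finite generating system for Γ^s.) -/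
open Finset

/-- Membership in the Newton polyhedron gives convex weights. -/
lemma hull_weights {d n : ℕ} (p : Fin n → Fin d → ℕ) (K : Finset (Fin n)) (x : Fin d → ℝ)
    (hx : x ∈ convexHull ℝ (⋃ i ∈ K, {y : Fin d → ℝ | ∀ j, (p i j : ℝ) ≤ y j})) :
    ∃ w : Fin n → ℝ, (∀ j, 0 ≤ w j) ∧ (∀ j ∉ K, w j = 0) ∧ (∑ j, w j) = 1 ∧
      ∀ m, (∑ j, w j * p j m) ≤ x m := by
  rw [_root_.convexHull_eq] at hx
  obtain ⟨ι, t, w, z, hw0, hw1, hz, hcm⟩ := hx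
  have ht : t.Nonempty := by
    rcases Finset.eq_empty_or_nonempty t with h | h
    · simp [h] at hw1
    · exact h
  have hzspec : ∀ k ∈ t, ∃ j ∈ K, ∀ m, (p j m : ℝ) ≤ z k m := by
    intro k hk
    have := hz k hk
    simpa [Set.mem_iUnion] using this
  obtain ⟨k₀, hk₀⟩ := ht
  obtain ⟨j₀, hj₀, -⟩ := hzspec k₀ hk₀
  classical
  set g : ι → Fin n := fun k => if h : k ∈ t then (hzspec k h).choose else j₀ with hg
  have hgspec : ∀ k ∈ t, g k ∈ K ∧ ∀ m, (p (g k) m : ℝ) ≤ z k m := by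
    intro k hk
    simp only [hg, dif_pos hk]
    exact ⟨(hzspec k hk).choose_spec.1, (hzspec k hk).choose_spec.2⟩
  refine ⟨fun j => ∑ k ∈ t.filter (fun k => g k = j), w k, ?_, ?_, ?_, ?_⟩
  · intro j
    exact Finset.sum_nonneg fun k hk => hw0 k (Finset.mem_filter.mp hk).1
  · intro j hj
    show (∑ k ∈ t.filter (fun k => g k = j), w k) = 0
    rw [Finset.filter_false_of_mem, Finset.sum_empty]
    intro k hk hgk
    exact hj (hgk ▸ (hgspec k hk).1)
  · show (∑ j, ∑ k ∈ t.filter (fun k => g k = j), w k) = 1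
    rw [Finset.sum_fiberwise_of_maps_to (fun k _ => Finset.mem_univ (g k)), hw1]
  · intro m
    have h1 : (∑ j, (∑ k ∈ t.filter (fun k => g k = j), w k) * (p j m : ℝ))
        = ∑ k ∈ t, w k * (p (g k) m : ℝ) := by
      rw [← Finset.sum_fiberwise_of_maps_to (fun k _ => Finset.mem_univ (g k))
        (fun k => w k * (p (g k) m : ℝ))]
      refine Finset.sum_congr rfl fun j _ => ?_
      rw [Finset.sum_mul]
      refine Finset.sum_congr rfl fun k hk => ?_
      rw [(Finset.mem_filter.mp hk).2]
    rw [h1]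
    have h2 : x m = ∑ k ∈ t, w k * z k m := by
      rw [← hcm, Finset.centerMass_eq_of_sum_1 _ _ hw1]
      simp [Finset.sum_apply]
    rw [h2]
    exact Finset.sum_le_sum fun k hk =>
      mul_le_mul_of_nonneg_left ((hgspec k hk).2 m) (hw0 k hk)

/-- Convex weights give membership in the Newton polyhedron. -/
lemma weights_hull {d n : ℕ} (p : Fin n → Fin d → ℕ) (K : Finset (Fin n)) (x : Fin d → ℝ)
    (w : Fin n → ℝ) (hw0 : ∀ j, 0 ≤ w j) (hwK : ∀ j ∉ K, w j = 0) (hw1 : (∑ j, w j) = 1)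
    (hle : ∀ m, (∑ j, w j * p j m) ≤ x m) :
    x ∈ convexHull ℝ (⋃ i ∈ K, {y : Fin d → ℝ | ∀ j, (p i j : ℝ) ≤ y j}) := by
  classical
  set v : Fin d → ℝ := fun m => x m - ∑ j, w j * p j m with hv
  have hv0 : ∀ m, 0 ≤ v m := fun m => sub_nonneg.mpr (hle m)
  set z : Fin n → (Fin d → ℝ) := fun j m => (p j m : ℝ) + v m with hz
  set t : Finset (Fin n) := Finset.univ.filter (fun j => w j ≠ 0) with ht
  have htsum : (∑ j ∈ t, w j) = 1 := by rw [ht, Finset.sum_filter_ne_zero, hw1]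
  have hmem : t.centerMass w z ∈ convexHull ℝ (⋃ i ∈ K, {y : Fin d → ℝ | ∀ j, (p i j : ℝ) ≤ y j}) := by
    refine Finset.centerMass_mem_convexHull t (fun j _ => hw0 j) (htsum ▸ one_pos) ?_
    intro j hj
    have hjK : j ∈ K := by
      by_contra hjK
      exact (Finset.mem_filter.mp hj).2 (hwK j hjK)
    refine Set.mem_iUnion.mpr ⟨j, Set.mem_iUnion.mpr ⟨hjK, ?_⟩⟩
    intro m
    exact le_add_of_nonneg_right (hv0 m)
  have heq : t.centerMass w z = x := by
    rw [Finset.centerMass_eq_of_sum_1 _ _ htsum]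
    funext m
    rw [Finset.sum_apply]
    have : ∀ j ∈ t, (w j • z j) m = w j * (p j m : ℝ) + w j * v m := by
      intro j _; simp [hz, mul_add]
    rw [Finset.sum_congr rfl this, Finset.sum_add_distrib, ← Finset.sum_mul, htsum]
    have : (∑ j ∈ t, w j * (p j m : ℝ)) = ∑ j, w j * (p j m : ℝ) := by
      refine Finset.sum_subset (Finset.filter_subset _ _) ?_
      intro j _ hj
      have : w j = 0 := by
        by_contra h
        exact hj (Finset.mem_filter.mpr ⟨Finset.mem_univ j, h⟩)
      simp [this]
    rw [this, one_mul, hv]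
    ring
  rwa [heq] at hmem

/-- An element of the submonoid generated by a set in `ℕ^d` lies in the submonoid
generated by the generators below it. -/
lemma mem_closure_le {d : ℕ} (T : Set (Fin d → ℕ)) (β : Fin d → ℕ)
    (h : β ∈ AddSubmonoid.closure T) :
    β ∈ AddSubmonoid.closure {y | y ∈ T ∧ y ≤ β} := by
  induction h using AddSubmonoid.closure_induction with
  | mem x hx => exact AddSubmonoid.subset_closure ⟨hx, le_refl x⟩
  | zero => exact AddSubmonoid.zero_mem _
  | add x y hx hy ihx ihy =>
      have hx' : AddSubmonoid.closure {y' | y' ∈ T ∧ y' ≤ x}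
          ≤ AddSubmonoid.closure {y' | y' ∈ T ∧ y' ≤ x + y} :=
        AddSubmonoid.closure_mono (fun z hz => ⟨hz.1, le_trans hz.2 (le_add_right le_rfl)⟩)
      have hy' : AddSubmonoid.closure {y' | y' ∈ T ∧ y' ≤ y}
          ≤ AddSubmonoid.closure {y' | y' ∈ T ∧ y' ≤ x + y} :=
        AddSubmonoid.closure_mono (fun z hz => ⟨hz.1, le_trans hz.2 (le_add_left le_rfl)⟩)
      exact AddSubmonoid.add_mem _ (hx' ihx) (hy' ihy)

def natIntCast (d : ℕ) : (Fin d → ℕ) →+ (Fin d → ℤ) where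
  toFun := fun x j => (x j : ℤ)
  map_zero' := by funext j; simp
  map_add' := by intro x y; funext j; simp

lemma coord_zero_of_gen_zero {d : ℕ} (T : Set (Fin d → ℕ)) (i : Fin d)
    (hT : ∀ y ∈ T, y i = 0) (β : Fin d → ℕ) (h : β ∈ AddSubmonoid.closure T) :
    β i = 0 := by
  induction h using AddSubmonoid.closure_induction with
  | mem x hx => exact hT x hx
  | zero => rfl
  | add x y hx hy ihx ihy => simp [Pi.add_apply, ihx, ihy]

lemma toSubgroup {d n : ℕ} (p : Fin n → Fin d → ℕ) (K : Finset (Fin n)) (β : Fin d → ℕ)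
    (h : β ∈ AddSubmonoid.closure {y | ∃ i ∉ K, y = p i}) :
    (fun j => (β j : ℤ)) ∈
      AddSubgroup.closure {x : Fin d → ℤ | ∃ i ∉ K, x = fun j => (p i j : ℤ)} := by
  have h2 : (natIntCast d) β ∈
      AddSubmonoid.map (natIntCast d) (AddSubmonoid.closure {y | ∃ i ∉ K, y = p i}) :=
    ⟨β, h, rfl⟩
  rw [AddMonoidHom.map_mclosure] at h2
  have h3 : AddSubmonoid.closure ((natIntCast d) '' {y | ∃ i ∉ K, y = p i}) ≤
      (AddSubgroup.closure
        {x : Fin d → ℤ | ∃ i ∉ K, x = fun j => (p i j : ℤ)}).toAddSubmonoid := by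
    rw [AddSubmonoid.closure_le]
    rintro x ⟨y, ⟨i, hiK, rfl⟩, rfl⟩
    exact AddSubgroup.subset_closure ⟨i, hiK, rfl⟩
  exact h3 h2

/-- If `β` is in the semigroup and `β ≤ γ` with `γ` outside the Newton polyhedron of `K`,
then `β` is in the group generated by the `p i`, `i ∉ K`. -/
lemma mem_subgroup_of_notin_hull {d n : ℕ} (p : Fin n → Fin d → ℕ) (K : Finset (Fin n))
    (β γ : Fin d → ℕ) (hβ : β ∈ AddSubmonoid.closure (Set.range p)) (hle : β ≤ γ)
    (hK : (fun j => (γ j : ℝ)) ∉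
      convexHull ℝ (⋃ i ∈ K, {x : Fin d → ℝ | ∀ j, (p i j : ℝ) ≤ x j})) :
    (fun j => (β j : ℤ)) ∈
      AddSubgroup.closure {x : Fin d → ℤ | ∃ i ∉ K, x = fun j => (p i j : ℤ)} := by
  apply toSubgroup
  have h1 := mem_closure_le _ _ hβ
  refine AddSubmonoid.closure_mono ?_ h1
  rintro y ⟨⟨j, rfl⟩, hyle⟩
  refine ⟨j, fun hjK => ?_, rfl⟩
  apply hK
  apply subset_convexHull
  refine Set.mem_iUnion.mpr ⟨j, Set.mem_iUnion.mpr ⟨hjK, fun m => ?_⟩⟩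
  show (p j m : ℝ) ≤ (γ m : ℝ)
  exact_mod_cast le_trans (hyle m) (hle m)

/-- Shifting down along coordinate `i` while staying above all `p j i` keeps us
in the Newton polyhedron. -/
lemma hull_shift {d n : ℕ} (p : Fin n → Fin d → ℕ) (K : Finset (Fin n))
    (γ δ : Fin d → ℕ) (i : Fin d)
    (hi : ∀ j, (p j i : ℝ) ≤ (δ i : ℝ)) (hother : ∀ m, m ≠ i → δ m = γ m)
    (hγ : (fun j => (γ j : ℝ)) ∈
      convexHull ℝ (⋃ i ∈ K, {x : Fin d → ℝ | ∀ j, (p i j : ℝ) ≤ x j})) :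
    (fun j => (δ j : ℝ)) ∈
      convexHull ℝ (⋃ i ∈ K, {x : Fin d → ℝ | ∀ j, (p i j : ℝ) ≤ x j}) := by
  obtain ⟨w, hw0, hwK, hw1, hwle⟩ := hull_weights p K _ hγ
  refine weights_hull p K _ w hw0 hwK hw1 ?_
  intro m
  by_cases hm : m = i
  · subst hm
    calc (∑ j, w j * (p j m : ℝ)) ≤ ∑ j, w j * (δ m : ℝ) :=
          Finset.sum_le_sum fun j _ => mul_le_mul_of_nonneg_left (hi j) (hw0 j)
      _ = (δ m : ℝ) := by rw [← Finset.sum_mul, hw1, one_mul]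
  · rw [hother m hm]
    exact hwle m

/-- **Finite generating set for the saturated semigroup.**
Let `Γ ⊆ ℕ^d` be the submonoid generated by `p 1, …, p n`, and assume every
coordinate axis contains a nonzero element of `Γ`.  With `b i` the minimal `i`-th
coordinate of a nonzero element of `Γ` supported on the `i`-th axis and
`c i := max_j (p j) i`, set `B := {γ | ∀ i, γ i < b i + c i}` and let `S` be the set
of `γ ∈ ℕ^d` satisfying the saturation condition of the main theorem.  Then `S` is
contained in the submonoid of `ℕ^d` generated by `S ∩ B`. -/
theorem saturated_semigroup_finite_generation
    {d n : ℕ} (p : Fin n → (Fin d → ℕ))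
    (Γ : AddSubmonoid (Fin d → ℕ)) (hΓ : Γ = AddSubmonoid.closure (Set.range p))
    (haxis : ∀ i : Fin d, ∃ γ ∈ Γ, γ ≠ 0 ∧ ∀ j, j ≠ i → γ j = 0)
    (b c : Fin d → ℕ)
    (hb : ∀ i, b i = sInf {e : ℕ | ∃ γ ∈ Γ, γ ≠ 0 ∧ (∀ j, j ≠ i → γ j = 0) ∧ γ i = e})
    (hc : ∀ i, c i = Finset.univ.sup (fun j : Fin n => p j i))
    (B S : Set (Fin d → ℕ))
    (hB : B = {γ : Fin d → ℕ | ∀ i, γ i < b i + c i})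
    (hS : S = {γ : Fin d → ℕ | ∀ K : Finset (Fin n),
        (fun j => (γ j : ℝ)) ∉
            convexHull ℝ (⋃ i ∈ K, {x : Fin d → ℝ | ∀ j, (p i j : ℝ) ≤ x j}) →
        (fun j => (γ j : ℤ)) ∈
          AddSubgroup.closure {x : Fin d → ℤ | ∃ i ∉ K, x = fun j => (p i j : ℤ)}}) :
    S ⊆ (AddSubmonoid.closure (S ∩ B) : Set (Fin d → ℕ)) := by
  classical
  subst hΓ
  -- the infimum defining `b i` is attained
  have hbmem : ∀ i : Fin d, ∃ β ∈ AddSubmonoid.closure (Set.range p),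
      β ≠ 0 ∧ (∀ j, j ≠ i → β j = 0) ∧ β i = b i := by
    intro i
    obtain ⟨γ, hγ, hne, hsupp⟩ := haxis i
    have h1 : γ i ∈ {e : ℕ | ∃ γ ∈ AddSubmonoid.closure (Set.range p),
        γ ≠ 0 ∧ (∀ j, j ≠ i → γ j = 0) ∧ γ i = e} := ⟨γ, hγ, hne, hsupp, rfl⟩
    have h2 := Nat.sInf_mem ⟨γ i, h1⟩
    obtain ⟨β, hβ, hβne, hβsupp, hβi⟩ := h2
    exact ⟨β, hβ, hβne, hβsupp, by rw [hβi, ← hb i]⟩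
  have hbpos : ∀ i, 1 ≤ b i := by
    intro i
    obtain ⟨β, -, hβne, hβsupp, hβi⟩ := hbmem i
    rcases Nat.eq_zero_or_pos (b i) with h | h
    · exfalso
      apply hβne
      funext j
      by_cases hj : j = i
      · subst hj; rw [hβi, h]; rfl
      · exact hβsupp j hj
    · exact h
  have hcpos : ∀ i, 1 ≤ c i := by
    intro i
    obtain ⟨β, hβ, -, -, hβi⟩ := hbmem i
    rcases Nat.eq_zero_or_pos (c i) with h | h
    · exfalso
      have hall : ∀ j : Fin n, p j i = 0 := by
        intro j
        have := Finset.le_sup (f := fun j : Fin n => p j i) (Finset.mem_univ j)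
        rw [← hc i, h] at this
        exact Nat.le_zero.mp this
      have hβi0 : β i = 0 := by
        refine coord_zero_of_gen_zero (Set.range p) i ?_ β hβ
        rintro y ⟨j, rfl⟩
        exact hall j
      rw [hβi] at hβi0
      exact absurd hβi0 (Nat.one_le_iff_ne_zero.mp (hbpos i))
    · exact h
  -- elements of Γ belong to S
  have hΓS : ∀ β ∈ AddSubmonoid.closure (Set.range p), β ∈ S := by
    intro β hβ
    rw [hS]
    intro K hK
    exact mem_subgroup_of_notin_hull p K β β hβ le_rfl hK
  -- induction on the total degree
  suffices H : ∀ N : ℕ, ∀ γ : Fin d → ℕ, (∑ i, γ i) ≤ N → γ ∈ S →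
      γ ∈ (AddSubmonoid.closure (S ∩ B) : Set (Fin d → ℕ)) by
    intro γ hγ
    exact H (∑ i, γ i) γ le_rfl hγ
  intro N
  induction N with
  | zero =>
      intro γ hsum hγ
      have hγ0 : γ = 0 := by
        funext m
        have h := Finset.single_le_sum (f := fun m => γ m) (fun m _ => Nat.zero_le _)
          (Finset.mem_univ m)
        exact Nat.le_zero.mp (le_trans h hsum)
      rw [hγ0]
      exact AddSubmonoid.zero_mem _
  | succ N ih =>
      intro γ hsum hγ
      by_cases hγB : ∀ i, γ i < b i + c i
      · exact AddSubmonoid.subset_closure ⟨hγ, by rw [hB]; exact hγB⟩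
      push_neg at hγB
      obtain ⟨i, hi⟩ := hγB
      obtain ⟨β, hβΓ, hβne, hβsupp, hβi⟩ := hbmem i
      have hβle : β ≤ γ := by
        intro m
        by_cases hm : m = i
        · subst hm
          rw [hβi]
          exact le_trans (Nat.le_add_right _ _) hi
        · rw [hβsupp m hm]; exact Nat.zero_le _
      set δ : Fin d → ℕ := γ - β with hδ
      have hδβ : δ + β = γ := tsub_add_cancel_of_le hβle
      have hδm : ∀ m, δ m = γ m - β m := fun m => rfl
      have hδi : c i ≤ δ i := by rw [hδm, hβi]; omega
      have hδother : ∀ m, m ≠ i → δ m = γ m := by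
        intro m hm; rw [hδm, hβsupp m hm]; omega
      have hsumβ : b i ≤ ∑ m, β m :=
        hβi ▸ Finset.single_le_sum (f := fun m => β m) (fun m _ => Nat.zero_le _)
          (Finset.mem_univ i)
      have hsumeq : (∑ m, δ m) + ∑ m, β m = ∑ m, γ m := by
        rw [← Finset.sum_add_distrib]
        exact Finset.sum_congr rfl fun m _ => congrFun hδβ m
      have hδsum : (∑ m, δ m) ≤ N := by
        have := hbpos i; omega
      rw [hS] at hγ
      -- `δ` belongs to `S`
      have hδS : δ ∈ S := by
        rw [hS]
        intro K hKδ
        have hKγ : (fun j => (γ j : ℝ)) ∉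
            convexHull ℝ (⋃ i ∈ K, {x : Fin d → ℝ | ∀ j, (p i j : ℝ) ≤ x j}) := by
          intro hγhull
          apply hKδ
          refine hull_shift p K γ δ i ?_ hδother hγhull
          intro j
          have h1 : p j i ≤ c i := by
            rw [hc i]; exact Finset.le_sup (f := fun j : Fin n => p j i) (Finset.mem_univ j)
          exact_mod_cast le_trans h1 hδi
        have hγG := hγ K hKγ
        have hβG := mem_subgroup_of_notin_hull p K β γ hβΓ hβle hKγ
        have hsub : (fun j => (δ j : ℤ)) = (fun j => (γ j : ℤ)) - (fun j => (β j : ℤ)) := by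
          funext j
          simp only [Pi.sub_apply]
          rw [hδm, Nat.cast_sub (hβle j)]
        rw [hsub]
        exact AddSubgroup.sub_mem _ hγG hβG
      -- `β` belongs to `S ∩ B`
      have hβS : β ∈ S := hΓS β hβΓ
      have hβB : β ∈ B := by
        rw [hB]
        intro m
        by_cases hm : m = i
        · subst hm; rw [hβi]; have := hcpos m; omega
        · rw [hβsupp m hm]; have h1 := hbpos m; have h2 := hcpos m; omega
      have h1 := ih δ hδsum hδS
      have h2 : β ∈ (AddSubmonoid.closure (S ∩ B) : Set (Fin d → ℕ)) :=
        AddSubmonoid.subset_closure ⟨hβS, hβB⟩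
      have h3 := AddSubmonoid.add_mem _ h1 h2
      rwa [hδβ] at h3
end
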